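/- arXiv:1805.08024 — 5 statements merged into one kernel-verified Lean document; each statement's English description precedes it below -/
import Mathlib

section
/- Let φ : ℝ² → ℝ ∪ {+∞} be lower semicontinuous with {x : φ(x) < +∞} a nonempty subset of the unit circle S¹. Then conv(φ)(ξ) = φ(ξ) for every ξ ∈ S¹. -/
open Set MeasureTheory
open scoped Topology ENNReal

noncomputable section

/-- The plane ℝ² with the Euclidean inner product. -/
abbrev E2 := EuclideanSpace ℝ (Fin 2)

/-- The unit circle S¹ ⊂ ℝ². -/
def S1 : Set E2 := Metric.sphere 0 1

/-- The closed unit disk 𝔻̄ ⊂ ℝ². -/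
def cDisk : Set E2 := Metric.closedBall 0 1

/-- The essential domain of a function `u : ℝ² → ℝ ∪ {+∞}`. -/
def essDom (u : E2 → EReal) : Set E2 := {x | u x < ⊤}

/-- The domain of support `Ω_u`: the interior of the essential domain. -/
def suppDom (u : E2 → EReal) : Set E2 := interior (essDom u)

/-- The subdifferential of `u` at `x`. -/
def subdiff (u : E2 → EReal) (x : E2) : Set E2 :=
  {p | ∀ z : E2, u x + ((inner ℝ p (z - x) : ℝ) : EReal) ≤ u z}

/-- The Monge–Ampère measure of `u` on a set `ω`. -/
def MAmeasure (u : E2 → EReal) (ω : Set E2) : ℝ≥0∞ :=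
  volume (⋃ x ∈ ω, subdiff u x)

/-- `u` is gradient-surjective: the subdifferentials over Ω_u cover ℝ². -/
def GradientSurjective (u : E2 → EReal) : Prop :=
  ⋃ x ∈ suppDom u, subdiff u x = univ

/-- The convex envelope: pointwise sup of affine minorants. -/
def convEnv (φ : E2 → EReal) (x : E2) : EReal :=
  ⨆ ℓ ∈ {ℓ : E2 →ᵃ[ℝ] ℝ | ∀ y, (ℓ y : EReal) ≤ φ y}, ((ℓ x : ℝ) : EReal)

/-- Ω_φ: the interior of the convex hull of the finiteness set of φ on S¹. -/
def OmegaPhi (φ : E2 → EReal) : Set E2 :=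
  interior (convexHull ℝ {ξ ∈ S1 | φ ξ < ⊤})

/-- Convexity of an ℝ ∪ {+∞}-valued function, via convexity of the epigraph. -/
def IsConvexEReal (u : E2 → EReal) : Prop :=
  Convex ℝ {p : E2 × ℝ | u p.1 ≤ (p.2 : EReal)}

/-- Proper closed convex function with values in ℝ ∪ {+∞}. -/
def IsClosedProperConvex (u : E2 → EReal) : Prop :=
  (∃ x, u x ≠ ⊤) ∧ (∀ x, u x ≠ ⊥) ∧ LowerSemicontinuous u ∧ IsConvexEReal u

/-- The Hessian determinant det D²f of a real function on ℝ². -/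
def hessDet (f : E2 → ℝ) (z : E2) : ℝ :=
  Matrix.det (Matrix.of fun i j : Fin 2 =>
    fderiv ℝ (fun w => fderiv ℝ f w (EuclideanSpace.single i 1)) z (EuclideanSpace.single j 1))

/-- φ is admissible boundary data: φ : S¹ → ℝ ∪ {+∞} (extended by +∞ off S¹),
lower semicontinuous and finite at at least three distinct points. -/
def IsAdmissiblePhi (φ : E2 → EReal) : Prop :=
  (∀ x, x ∉ S1 → φ x = ⊤) ∧ (∀ x, φ x ≠ ⊥) ∧ LowerSemicontinuous φ ∧
  ∃ ξ₁ ∈ S1, ∃ ξ₂ ∈ S1, ∃ ξ₃ ∈ S1,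
    ξ₁ ≠ ξ₂ ∧ ξ₁ ≠ ξ₃ ∧ ξ₂ ≠ ξ₃ ∧ φ ξ₁ ≠ ⊤ ∧ φ ξ₂ ≠ ⊤ ∧ φ ξ₃ ≠ ⊤

/-- A solution of the Minkowski problem with data (φ, ψ). -/
def IsMinkowskiSolution (φ : E2 → EReal) (ψ : E2 → ℝ) (u : E2 → EReal) : Prop :=
  IsClosedProperConvex u ∧
  (∀ z, z ∉ OmegaPhi φ → u z = convEnv φ z) ∧
  (∀ z ∈ OmegaPhi φ, u z ≠ ⊤) ∧
  ContDiffOn ℝ 2 (fun z => (u z).toReal) (OmegaPhi φ) ∧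
  ∀ z ∈ OmegaPhi φ, hessDet (fun w => (u w).toReal) z
    = (1 / ψ z) * ((1 - ‖z‖ ^ 2) ^ 2)⁻¹


/- STATEMENT 8: if φ is lower semicontinuous, valued in ℝ ∪ {+∞}, with nonempty
finiteness set contained in the unit circle, then its convex envelope agrees with φ
on the unit circle. -/

/-- A lower semicontinuous `EReal`-valued function that is never `⊥` is bounded below
on the compact set `S1`. -/
lemma exists_real_lowerBound_on_S1 (φ : E2 → EReal) (hlsc : LowerSemicontinuous φ)
    (hbot : ∀ x, φ x ≠ ⊥) :
    ∃ m : ℝ, ∀ x ∈ S1, (m : EReal) ≤ φ x := by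
  classical
  set r : E2 → ℝ := fun x => if h : φ x = ⊤ then 0 else (φ x).toReal - 1 with hr_def
  have hr : ∀ x, (r x : EReal) < φ x := by
    intro x
    by_cases h : φ x = ⊤
    · simp [hr_def, h]
    · have hx : ((φ x).toReal : EReal) = φ x := EReal.coe_toReal h (hbot x)
      simp only [hr_def, h, dif_neg, not_false_iff]
      rw [← hx]
      exact_mod_cast sub_one_lt _
  have hU : ∀ x ∈ S1, {y | (r x : EReal) < φ y} ∈ 𝓝 x := fun x _ => hlsc x _ (hr x)
  obtain ⟨t, htS, hcov⟩ :=
    (isCompact_sphere (0 : E2) 1).elim_nhds_subcover (fun x => {y | (r x : EReal) < φ y}) hU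
  have htne : t.Nonempty := by
    obtain ⟨x₀, hx₀⟩ : S1.Nonempty := NormedSpace.sphere_nonempty.2 zero_le_one
    rcases Set.mem_iUnion₂.1 (hcov hx₀) with ⟨z, hz, -⟩
    exact ⟨z, hz⟩
  refine ⟨t.inf' htne r, ?_⟩
  intro x hxS
  have := hcov hxS
  rcases Set.mem_iUnion₂.1 this with ⟨z, hz, hzx⟩
  calc ((t.inf' htne r : ℝ) : EReal) ≤ (r z : EReal) := by
        exact_mod_cast Finset.inf'_le r hz
    _ ≤ φ x := le_of_lt hzx

/-- if φ is lower semicontinuous, valued in ℝ ∪ {+∞}, with nonempty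
finiteness set contained in the unit circle, then its convex envelope agrees with φ
on the unit circle. -/
theorem convEnv_eq_on_circle
    (φ : E2 → EReal) (hlsc : LowerSemicontinuous φ) (hbot : ∀ x, φ x ≠ ⊥)
    (hne : {x | φ x ≠ ⊤}.Nonempty) (hsub : {x | φ x ≠ ⊤} ⊆ S1) :
    ∀ ξ ∈ S1, convEnv φ ξ = φ ξ := by
  obtain ⟨m, hm⟩ := exists_real_lowerBound_on_S1 φ hlsc hbot
  intro ξ hξ
  have hξn : ‖ξ‖ = 1 := by simpa using mem_sphere_zero_iff_norm.1 hξ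
  refine le_antisymm (iSup₂_le fun ℓ hℓ => hℓ ξ) ?_
  refine le_of_forall_lt_imp_le_of_dense fun c hc => ?_
  induction c with
  | bot => exact bot_le
  | top => exact absurd hc not_top_lt
  | coe c =>
    -- lower semicontinuity at ξ: φ > c near ξ
    have hev : ∀ᶠ y in 𝓝 ξ, (c : EReal) < φ y := hlsc ξ _ hc
    obtain ⟨ε, hε, hball⟩ := Metric.eventually_nhds_iff.1 hev
    set b : ℝ := max 0 (2 * (c - m) / ε ^ 2) with hb_def
    have hb0 : 0 ≤ b := le_max_left _ _
    have hb2 : 2 * (c - m) / ε ^ 2 ≤ b := le_max_right _ _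
    -- the affine map x ↦ b⟪ξ,x⟫ + (c - b)
    set ℓ : E2 →ᵃ[ℝ] ℝ :=
      ((b • (innerSL ℝ ξ : E2 →L[ℝ] ℝ) : E2 →L[ℝ] ℝ) : E2 →ₗ[ℝ] ℝ).toAffineMap
        + AffineMap.const ℝ E2 (c - b) with hℓ_def
    have hval : ∀ y, ℓ y = b * (inner ℝ ξ y : ℝ) + (c - b) := by
      intro y
      simp [hℓ_def]
    have hmin : ∀ y, (ℓ y : EReal) ≤ φ y := by
      intro y
      by_cases hyS : y ∈ S1
      · have hyn : ‖y‖ = 1 := by simpa using mem_sphere_zero_iff_norm.1 hyS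
        by_cases hnear : dist y ξ < ε
        · have hcy : (c : EReal) < φ y := hball hnear
          have hi : (inner ℝ ξ y : ℝ) ≤ 1 := by
            calc (inner ℝ ξ y : ℝ) ≤ ‖ξ‖ * ‖y‖ := real_inner_le_norm ξ y
              _ = 1 := by rw [hξn, hyn]; ring
          have hly : ℓ y ≤ c := by
            rw [hval]
            nlinarith
          calc (ℓ y : EReal) ≤ (c : EReal) := by exact_mod_cast hly
            _ ≤ φ y := hcy.le
        · push_neg at hnear
          have hd : ε ≤ ‖y - ξ‖ := by rwa [dist_eq_norm] at hnear
          have hsq : ‖y - ξ‖ ^ 2 = 2 - 2 * (inner ℝ ξ y : ℝ) := by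
            have h := @norm_sub_sq_real E2 _ _ y ξ
            have hc2 := real_inner_comm y ξ
            have hy2 : ‖y‖ ^ 2 = 1 := by rw [hyn]; ring
            have hx2 : ‖ξ‖ ^ 2 = 1 := by rw [hξn]; ring
            linarith
          have hi : (inner ℝ ξ y : ℝ) ≤ 1 - ε ^ 2 / 2 := by
            have h1 : ε ^ 2 ≤ ‖y - ξ‖ ^ 2 := by
              apply sq_le_sq' <;> nlinarith [norm_nonneg (y - ξ)]
            nlinarith
          have hly : ℓ y ≤ m := by
            rw [hval]
            have hε2 : 0 < ε ^ 2 := by positivity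
            have : 2 * (c - m) ≤ b * ε ^ 2 := by
              calc 2 * (c - m) = 2 * (c - m) / ε ^ 2 * ε ^ 2 := by field_simp
                _ ≤ b * ε ^ 2 := by nlinarith
            nlinarith
          calc (ℓ y : EReal) ≤ (m : EReal) := by exact_mod_cast hly
            _ ≤ φ y := hm y hyS
      · have : φ y = ⊤ := by
          by_contra h
          exact hyS (hsub h)
        rw [this]; exact le_top
    have hlξ : ℓ ξ = c := by
      rw [hval, real_inner_self_eq_norm_sq, hξn]
      ring
    have : (c : EReal) ≤ convEnv φ ξ := by
      rw [← hlξ]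
      exact le_iSup₂_of_le ℓ hmin le_rfl
    exact this

end
end

section
/- Let φ : ℝ² → ℝ ∪ {+∞} be lower semicontinuous with {x : φ(x) < +∞} a nonempty subset of the unit circle S¹. Let ξ₁ ≠ ξ₂ be points of S¹ such that φ(ξ) = +∞ for every ξ in one of the two open arcs of S¹ with endpoints ξ₁ and ξ₂. Then for every t ∈ (0,1), conv(φ)((1−t)ξ₁ + t ξ₂) = (1−t)·φ(ξ₁) + t·φ(ξ₂), where the right-hand side is computed in ℝ ∪ {+∞} (so it equals +∞ if either φ(ξ₁) or φ(ξ₂) is +∞). -/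
open Set MeasureTheory
open scoped Topology ENNReal

noncomputable section

open Filter
open scoped RealInnerProductSpace

private def affMap (v : E2) (d : ℝ) : E2 →ᵃ[ℝ] ℝ where
  toFun x := ⟪v, x⟫ + d
  linear := (innerSL ℝ v).toLinearMap
  map_vadd' p q := by simp [inner_add_right]; ring

@[simp] private lemma affMap_apply (v : E2) (d : ℝ) (x : E2) :
    affMap v d x = ⟪v, x⟫ + d := rfl

private lemma exists_lower_bound (φ : E2 → EReal) (hlsc : LowerSemicontinuous φ)
    (hbot : ∀ x, φ x ≠ ⊥) {K : Set E2} (hK : IsCompact K) :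
    ∃ m : ℝ, ∀ x ∈ K, (m : EReal) ≤ φ x := by
  have h : ∀ x : E2, ∃ rx : ℝ, (rx : EReal) < φ x := fun x =>
    ((EReal.exists_between_coe_real (bot_lt_iff_ne_bot.2 (hbot x)))).imp fun r hr => hr.2
  choose r hr using h
  have hopen : ∀ x : E2, IsOpen {y | (r x : EReal) < φ y} := fun x =>
    hlsc.isOpen_preimage (r x)
  obtain ⟨t, ht⟩ := hK.elim_finite_subcover (fun x => {y | (r x : EReal) < φ y})
    hopen (fun x _ => mem_iUnion.2 ⟨x, hr x⟩)
  rcases t.eq_empty_or_nonempty with rfl | hne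
  · refine ⟨0, fun x hx => absurd (ht hx) (by simp)⟩
  · refine ⟨t.inf' hne r, fun x hx => ?_⟩
    obtain ⟨i, hit, hxi⟩ := mem_iUnion₂.1 (ht hx)
    exact le_trans (EReal.coe_le_coe_iff.2 (Finset.inf'_le r hit)) (le_of_lt hxi)

private lemma p_comp (p : E2) (hp : p ≠ 0) : p 0 ≠ 0 ∨ p 1 ≠ 0 := by
  by_contra h
  push_neg at h
  exact hp (by ext i; fin_cases i <;> simp [h.1, h.2])

private lemma inner_coords (x y : E2) : ⟪x, y⟫ = x 0 * y 0 + x 1 * y 1 := by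
  simp [PiLp.inner_apply, Fin.sum_univ_two]; ring

private lemma sphere_secant_eq {p : E2} (hp : p ≠ 0) {c : ℝ} {ξ₁ ξ₂ ξ : E2}
    (h₁ : ‖ξ₁‖ = 1) (h₂ : ‖ξ₂‖ = 1) (hξ : ‖ξ‖ = 1) (h12 : ξ₁ ≠ ξ₂)
    (e₁ : ⟪p, ξ₁⟫ = c) (e₂ : ⟪p, ξ₂⟫ = c) (e : ⟪p, ξ⟫ = c) :
    ξ = ξ₁ ∨ ξ = ξ₂ := by
  set u : E2 := ξ₂ - ξ₁ with hu
  set v : E2 := ξ - ξ₁ with hv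
  have hpu : ⟪p, u⟫ = 0 := by rw [hu, inner_sub_right, e₁, e₂]; ring
  have hpv : ⟪p, v⟫ = 0 := by rw [hv, inner_sub_right, e₁, e]; ring
  rw [inner_coords] at hpu hpv
  have hdet : u 0 * v 1 - u 1 * v 0 = 0 := by
    rcases p_comp p hp with h | h
    · have h2 : p 0 * (u 0 * v 1 - u 1 * v 0) = 0 := by linear_combination v 1 * hpu - u 1 * hpv
      exact (mul_eq_zero.1 h2).resolve_left h
    · have h2 : p 1 * (u 0 * v 1 - u 1 * v 0) = 0 := by linear_combination u 0 * hpv - v 0 * hpu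
      exact (mul_eq_zero.1 h2).resolve_left h
  have hune : u ≠ 0 := sub_ne_zero.2 (Ne.symm h12)
  obtain ⟨s, hs⟩ : ∃ s : ℝ, v = s • u := by
    rcases p_comp u hune with h | h
    · refine ⟨v 0 / u 0, ?_⟩
      ext i
      fin_cases i
      · show v 0 = (v 0 / u 0) * u 0; field_simp
      · show v 1 = (v 0 / u 0) * u 1
        rw [div_mul_eq_mul_div, eq_div_iff h]; nlinarith [hdet]
    · refine ⟨v 1 / u 1, ?_⟩
      ext i
      fin_cases i
      · show v 0 = (v 1 / u 1) * u 0
        rw [div_mul_eq_mul_div, eq_div_iff h]; nlinarith [hdet]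
      · show v 1 = (v 1 / u 1) * u 1; field_simp
  have hxi : ξ = ξ₁ + s • u := by rw [← hs, hv]; abel
  set q : ℝ := ⟪ξ₁, ξ₂⟫ with hqdef
  have hu2 : ‖u‖ ^ 2 = 2 - 2 * q := by
    rw [hu, norm_sub_sq_real, h₁, h₂, real_inner_comm, ← hqdef]; ring
  have hq : q < 1 := by
    have h0 : 0 < ‖u‖ ^ 2 := pow_pos (norm_pos_iff.2 hune) 2
    nlinarith [hu2]
  have hinner : ⟪ξ₁, s • u⟫ = s * (q - 1) := by
    rw [real_inner_smul_right, hu, inner_sub_right, ← hqdef,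
      real_inner_self_eq_norm_sq, h₁]; ring
  have hnorm : ‖ξ₁ + s • u‖ ^ 2 = 1 := by rw [← hxi, hξ]; norm_num
  rw [norm_add_sq_real, hinner, h₁] at hnorm
  have hsu : ‖s • u‖ ^ 2 = s ^ 2 * (2 - 2 * q) := by
    rw [norm_smul, mul_pow, hu2]; simp [sq_abs]
  rw [hsu] at hnorm
  have hfac : s * (s - 1) = 0 := by
    have h1q : (0:ℝ) < 1 - q := by linarith
    have : (1 - q) * (s * (s - 1)) = 0 := by nlinarith [hnorm]
    exact (mul_eq_zero.1 this).resolve_left (by linarith)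
  rcases mul_eq_zero.1 hfac with h | h
  · left; rw [hxi, h, zero_smul, add_zero]
  · right; rw [hxi, sub_eq_zero.1 h, one_smul, hu]; abel

private lemma exists_minorant (φ : E2 → EReal) (hlsc : LowerSemicontinuous φ)
    (hbot : ∀ x, φ x ≠ ⊥) (hsub : {x | φ x ≠ ⊤} ⊆ S1)
    {ξ₁ ξ₂ : E2} (h₁ : ξ₁ ∈ S1) (h₂ : ξ₂ ∈ S1) (h12 : ξ₁ ≠ ξ₂)
    {p : E2} {c : ℝ} (hp : p ≠ 0) (e₁ : ⟪p, ξ₁⟫ = c) (e₂ : ⟪p, ξ₂⟫ = c)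
    (harc : ∀ ξ ∈ S1, ⟪p, ξ⟫ < c → φ ξ = ⊤)
    {a b : ℝ} (ha : (a : EReal) < φ ξ₁) (hb : (b : EReal) < φ ξ₂) :
    ∃ ℓ : E2 →ᵃ[ℝ] ℝ, (∀ y, (ℓ y : EReal) ≤ φ y) ∧ ℓ ξ₁ = a ∧ ℓ ξ₂ = b := by
  have hn₁ : ‖ξ₁‖ = 1 := by simpa [S1] using h₁
  have hn₂ : ‖ξ₂‖ = 1 := by simpa [S1] using h₂
  set w : E2 := ξ₂ - ξ₁ with hw
  have hwne : w ≠ 0 := sub_ne_zero.2 (Ne.symm h12)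
  have hw2 : ⟪w, w⟫ = ‖w‖ ^ 2 := real_inner_self_eq_norm_sq w
  have hwpos : (0:ℝ) < ‖w‖ ^ 2 := pow_pos (norm_pos_iff.2 hwne) 2
  set v : E2 := ((b - a) / ‖w‖ ^ 2) • w with hv
  set d : ℝ := a - ⟪v, ξ₁⟫ with hd
  have hℓ₁ : ∀ M : ℝ, affMap (v - M • p) (d + M * c) ξ₁ = a := by
    intro M
    simp only [affMap_apply, inner_sub_left, real_inner_smul_left, e₁, hd]
    ring
  have hℓ₂ : ∀ M : ℝ, affMap (v - M • p) (d + M * c) ξ₂ = b := by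
    intro M
    have hvw : ⟪v, ξ₂⟫ - ⟪v, ξ₁⟫ = b - a := by
      rw [← inner_sub_right]
      rw [hv, real_inner_smul_left, ← hw, hw2]
      field_simp
    simp only [affMap_apply, inner_sub_left, real_inner_smul_left, e₂, hd]
    linarith [hvw]
  set K : Set E2 := S1 ∩ {y | c ≤ ⟪p, y⟫} with hK
  have hKc : IsCompact K := by
    apply (isCompact_sphere (0:E2) 1).inter_right
    exact isClosed_le continuous_const (Continuous.inner continuous_const continuous_id)
  obtain ⟨m, hm⟩ := exists_lower_bound φ hlsc hbot hKc
  have main : ∃ M : ℝ, 0 ≤ M ∧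
      ∀ y ∈ K, ((affMap v d y - M * (⟪p, y⟫ - c) : ℝ) : EReal) ≤ φ y := by
    by_contra hcon
    push_neg at hcon
    have hseq : ∀ n : ℕ, ∃ y ∈ K,
        φ y < ((affMap v d y - n * (⟪p, y⟫ - c) : ℝ) : EReal) := by
      intro n
      obtain ⟨y, hyK, hy⟩ := hcon n (Nat.cast_nonneg n)
      exact ⟨y, hyK, hy⟩
    choose y hyK hy using hseq
    obtain ⟨z, hzK, σ, hσ, hzt⟩ := hKc.tendsto_subseq hyK
    have hreal : ∀ n : ℕ, m < affMap v d (y n) - n * (⟪p, y n⟫ - c) := by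
      intro n
      have := lt_of_le_of_lt (hm (y n) (hyK n)) (hy n)
      exact_mod_cast this
    have hg0 : ∀ n : ℕ, 0 ≤ ⟪p, y n⟫ - c := fun n => sub_nonneg.2 (hyK n).2
    have hbdd : ∀ n : ℕ, (n : ℝ) * (⟪p, y n⟫ - c) ≤ ‖v‖ + d - m := by
      intro n
      have h1 : ⟪v, y n⟫ ≤ ‖v‖ := by
        have := real_inner_le_norm v (y n)
        have hyn : ‖y n‖ = 1 := by
          have := (hyK n).1; simpa [S1] using this
        rw [hyn, mul_one] at this; exact this
      have h2 := hreal n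
      simp only [affMap_apply] at h2
      linarith
    have htc : Tendsto (fun k => ⟪p, y (σ k)⟫ - c) atTop (𝓝 0) := by
      have hup : Tendsto (fun k => (‖v‖ + d - m) / (σ k : ℝ)) atTop (𝓝 0) :=
        (tendsto_const_div_atTop_nhds_zero_nat (‖v‖ + d - m)).comp hσ.tendsto_atTop
      apply tendsto_of_tendsto_of_tendsto_of_le_of_le' tendsto_const_nhds hup
      · exact Eventually.of_forall fun k => hg0 (σ k)
      · filter_upwards [Filter.eventually_ge_atTop 1] with k hk
        have hσk : (0:ℝ) < (σ k : ℕ) := by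
          have : 1 ≤ σ k := le_trans hk (hσ.le_apply)
          exact_mod_cast this
        rw [le_div_iff₀ hσk]
        calc (⟪p, y (σ k)⟫ - c) * (σ k : ℝ) = (σ k : ℝ) * (⟪p, y (σ k)⟫ - c) := by ring
          _ ≤ _ := hbdd (σ k)
    have hpz : ⟪p, z⟫ = c := by
      have h1 : Tendsto (fun k => ⟪p, y (σ k)⟫ - c) atTop (𝓝 (⟪p, z⟫ - c)) :=
        ((Continuous.inner continuous_const continuous_id).tendsto z).comp hzt |>.sub_const c
      have := tendsto_nhds_unique h1 htc
      linarith [this]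
    have hzn : ‖z‖ = 1 := by have := hzK.1; simpa [S1] using this
    have hlt : ((affMap v d z : ℝ) : EReal) < φ z := by
      rcases sphere_secant_eq hp hn₁ hn₂ hzn h12 e₁ e₂ hpz with rfl | rfl
      · have := hℓ₁ 0; simp only [zero_smul, sub_zero, zero_mul, add_zero] at this
        rw [this]; exact ha
      · have := hℓ₂ 0; simp only [zero_smul, sub_zero, zero_mul, add_zero] at this
        rw [this]; exact hb
    obtain ⟨r, hr1, hr2⟩ := EReal.exists_between_coe_real hlt
    have hev1 : ∀ᶠ k in atTop, (r : EReal) < φ (y (σ k)) :=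
      hzt.eventually (hlsc z r hr2)
    have hev2 : ∀ᶠ k in atTop, affMap v d (y (σ k)) < r := by
      have hcont : Tendsto (fun k => affMap v d (y (σ k))) atTop (𝓝 (affMap v d z)) := by
        have : Continuous fun x : E2 => affMap v d x := by
          simp only [affMap_apply]
          exact (Continuous.inner continuous_const continuous_id).add continuous_const
        exact (this.tendsto z).comp hzt
      exact hcont.eventually_lt_const (by exact_mod_cast hr1)
    obtain ⟨k, hk1, hk2⟩ := (hev1.and hev2).exists
    have h3 : φ (y (σ k)) ≤ ((affMap v d (y (σ k)) : ℝ) : EReal) := by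
      refine le_trans (le_of_lt (hy (σ k))) ?_
      apply EReal.coe_le_coe_iff.2
      nlinarith [hg0 (σ k), Nat.cast_nonneg (α := ℝ) (σ k)]
    have := lt_of_lt_of_le hk1 h3
    rw [EReal.coe_lt_coe_iff] at this
    linarith
  obtain ⟨M, hM0, hMle⟩ := main
  refine ⟨affMap (v - M • p) (d + M * c), ?_, hℓ₁ M, hℓ₂ M⟩
  intro x
  by_cases hx : φ x = ⊤
  · rw [hx]; exact le_top
  · have hxS : x ∈ S1 := hsub hx
    have hxc : c ≤ ⟪p, x⟫ := by
      by_contra hlt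
      exact hx (harc x hxS (lt_of_not_ge hlt))
    have := hMle x ⟨hxS, hxc⟩
    refine le_trans (EReal.coe_le_coe_iff.2 (le_of_eq ?_)) this
    simp only [affMap_apply, inner_sub_left, real_inner_smul_left]
    ring


/-- if φ = +∞ on one of the two open arcs of S¹ with endpoints ξ₁, ξ₂
(an arc being the portion of S¹ strictly on one side of the secant line through
ξ₁ and ξ₂), then the convex envelope of φ is, on the open chord (ξ₁, ξ₂), the affine
interpolation of φ(ξ₁) and φ(ξ₂) (equal to +∞ if either value is +∞). -/
theorem convEnv_affine_on_chord
    (φ : E2 → EReal) (hlsc : LowerSemicontinuous φ) (hbot : ∀ x, φ x ≠ ⊥)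
    (hne : {x | φ x ≠ ⊤}.Nonempty) (hsub : {x | φ x ≠ ⊤} ⊆ S1)
    (ξ₁ ξ₂ : E2) (h₁ : ξ₁ ∈ S1) (h₂ : ξ₂ ∈ S1) (h12 : ξ₁ ≠ ξ₂)
    (harc : ∃ (p : E2) (c : ℝ), p ≠ 0 ∧ (inner ℝ p ξ₁ : ℝ) = c ∧ (inner ℝ p ξ₂ : ℝ) = c ∧
      ∀ ξ ∈ S1, (inner ℝ p ξ : ℝ) < c → φ ξ = ⊤) :
    ∀ t ∈ Ioo (0:ℝ) 1,
      convEnv φ ((1 - t) • ξ₁ + t • ξ₂)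
        = ((1 - t : ℝ) : EReal) * φ ξ₁ + ((t : ℝ) : EReal) * φ ξ₂ := by
  obtain ⟨p, c, hp, e₁, e₂, harcinf⟩ := harc
  intro t ht
  obtain ⟨ht0, ht1⟩ := ht
  set x_t : E2 := (1 - t) • ξ₁ + t • ξ₂ with hxt
  have hline : ∀ ℓ : E2 →ᵃ[ℝ] ℝ, ℓ x_t = (1 - t) * ℓ ξ₁ + t * ℓ ξ₂ := by
    intro ℓ
    have h1 : x_t = AffineMap.lineMap ξ₁ ξ₂ t := by
      rw [AffineMap.lineMap_apply_module]
    rw [h1, ℓ.apply_lineMap, AffineMap.lineMap_apply_module, smul_eq_mul, smul_eq_mul]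
  have h1t' : (0:EReal) ≤ ((1 - t : ℝ) : EReal) := EReal.coe_nonneg.2 (by linarith)
  have ht' : (0:EReal) ≤ ((t : ℝ) : EReal) := EReal.coe_nonneg.2 (le_of_lt ht0)
  -- upper bound
  have hub : convEnv φ x_t ≤ ((1 - t : ℝ) : EReal) * φ ξ₁ + ((t : ℝ) : EReal) * φ ξ₂ := by
    apply iSup₂_le
    intro ℓ hℓ
    rw [hline ℓ]
    calc (((1 - t) * ℓ ξ₁ + t * ℓ ξ₂ : ℝ) : EReal)
        = ((1 - t : ℝ) : EReal) * ((ℓ ξ₁ : ℝ) : EReal) + ((t : ℝ) : EReal) * ((ℓ ξ₂ : ℝ) : EReal) := by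
          rw [EReal.coe_add, EReal.coe_mul, EReal.coe_mul]
      _ ≤ _ := add_le_add (mul_le_mul_of_nonneg_left (hℓ ξ₁) h1t')
          (mul_le_mul_of_nonneg_left (hℓ ξ₂) ht')
  -- minorant-based lower bounds
  have hmin : ∀ a b : ℝ, (a : EReal) < φ ξ₁ → (b : EReal) < φ ξ₂ →
      (((1 - t) * a + t * b : ℝ) : EReal) ≤ convEnv φ x_t := by
    intro a b ha hb
    obtain ⟨ℓ, hℓ, hℓ1, hℓ2⟩ := exists_minorant φ hlsc hbot hsub h₁ h₂ h12 hp e₁ e₂ harcinf ha hb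
    have hv : ℓ x_t = (1 - t) * a + t * b := by rw [hline ℓ, hℓ1, hℓ2]
    exact le_iSup₂_of_le ℓ hℓ (le_of_eq (by rw [hv]))
  have hmulbot : ∀ x : EReal, x ≠ ⊥ → ((t : ℝ) : EReal) * x ≠ ⊥ := by
    intro x hx
    induction x with
    | bot => exact absurd rfl hx
    | coe r => rw [← EReal.coe_mul]; exact EReal.coe_ne_bot _
    | top => rw [EReal.mul_top_of_pos (by exact_mod_cast ht0)]; simp
  refine le_antisymm hub ?_
  by_cases h1top : φ ξ₁ = ⊤
  · obtain ⟨b, _, hb⟩ := EReal.exists_between_coe_real (bot_lt_iff_ne_bot.2 (hbot ξ₂))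
    have hRtop : convEnv φ x_t = ⊤ := by
      rw [EReal.eq_top_iff_forall_lt]
      intro z
      set a : ℝ := (z + 1 - t * b) / (1 - t) with hadef
      have h1t0 : (1:ℝ) - t ≠ 0 := by linarith
      have hval : (1 - t) * a + t * b = z + 1 := by
        rw [hadef]; field_simp; ring
      calc (z : EReal) < ((z + 1 : ℝ) : EReal) := by exact_mod_cast lt_add_one z
        _ = (((1 - t) * a + t * b : ℝ) : EReal) := by rw [hval]
        _ ≤ _ := hmin a b (h1top ▸ EReal.coe_lt_top a) hb
    rw [hRtop, h1top, EReal.coe_mul_top_of_pos (by linarith),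
      EReal.top_add_of_ne_bot (hmulbot _ (hbot ξ₂))]
  · by_cases h2top : φ ξ₂ = ⊤
    · obtain ⟨a, _, ha⟩ := EReal.exists_between_coe_real (bot_lt_iff_ne_bot.2 (hbot ξ₁))
      have hRtop : convEnv φ x_t = ⊤ := by
        rw [EReal.eq_top_iff_forall_lt]
        intro z
        set b : ℝ := (z + 1 - (1 - t) * a) / t with hbdef
        have ht0' : t ≠ 0 := ne_of_gt ht0
        have hval : (1 - t) * a + t * b = z + 1 := by
          rw [hbdef]; field_simp; ring
        calc (z : EReal) < ((z + 1 : ℝ) : EReal) := by exact_mod_cast lt_add_one z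
          _ = (((1 - t) * a + t * b : ℝ) : EReal) := by rw [hval]
          _ ≤ _ := hmin a b ha (h2top ▸ EReal.coe_lt_top b)
      have h1bot : ((1 - t : ℝ) : EReal) * φ ξ₁ ≠ ⊥ := by
        obtain ⟨r₁, hr₁⟩ : ∃ r : ℝ, φ ξ₁ = (r : EReal) :=
          ⟨(φ ξ₁).toReal, (EReal.coe_toReal h1top (hbot ξ₁)).symm⟩
        rw [hr₁, ← EReal.coe_mul]; exact EReal.coe_ne_bot _
      rw [hRtop, h2top, EReal.coe_mul_top_of_pos (by exact_mod_cast ht0),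
        EReal.add_top_of_ne_bot h1bot]
    · obtain ⟨r₁, hr₁⟩ : ∃ r : ℝ, φ ξ₁ = (r : EReal) :=
        ⟨(φ ξ₁).toReal, (EReal.coe_toReal h1top (hbot ξ₁)).symm⟩
      obtain ⟨r₂, hr₂⟩ : ∃ r : ℝ, φ ξ₂ = (r : EReal) :=
        ⟨(φ ξ₂).toReal, (EReal.coe_toReal h2top (hbot ξ₂)).symm⟩
      rw [hr₁, hr₂, ← EReal.coe_mul, ← EReal.coe_mul, ← EReal.coe_add]
      rw [← EReal.ge_of_forall_gt_iff_ge]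
      intro z hz
      rw [EReal.coe_lt_coe_iff] at hz
      set ε : ℝ := ((1 - t) * r₁ + t * r₂) - z with hεdef
      have hε : 0 < ε := by rw [hεdef]; linarith
      have h1 := hmin (r₁ - ε) (r₂ - ε)
        (by rw [hr₁]; exact_mod_cast sub_lt_self r₁ hε)
        (by rw [hr₂]; exact_mod_cast sub_lt_self r₂ hε)
      have hval : (1 - t) * (r₁ - ε) + t * (r₂ - ε) = z := by rw [hεdef]; ring
      rw [hval] at h1
      exact h1


end
end

section
/- Let f : ℝ² → ℝ be C¹ with ‖∇f(x)‖ < 1 for every x ∈ ℝ² (so that its graph Σ = {(x, f(x)) : x ∈ ℝ²} ⊂ ℝ³ is an entire spacelike surface in Minkowski 3-space). Define the domain of dependence D_Σ = {p ∈ ℝ³ : for every 1-Lipschitz curve c : ℝ → ℝ² with c(p₃) = (p₁, p₂), there exists t ∈ ℝ with f(c(t)) = t}. Then D_Σ is open, and D_Σ equals the intersection of all open null half-spaces containing Σ, where an open null half-space is a set of the form {x ∈ ℝ³ : x₁ξ₁ + x₂ξ₂ − x₃ < c} or {x ∈ ℝ³ : x₁ξ₁ + x₂ξ₂ − x₃ >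 c} with ξ ∈ S¹, c ∈ ℝ (the intersection over an empty family being ℝ³). -/
open Set MeasureTheory
open scoped Topology ENNReal

noncomputable section

/-- Minkowski 3-space ℝ^{2,1}, identified with ℝ² × ℝ. -/
abbrev M3 := E2 × ℝ


open Filter
open scoped InnerProductSpace

lemma lip_of_grad (f : E2 → ℝ) (hf : ContDiff ℝ 1 f) (hgrad : ∀ x : E2, ‖fderiv ℝ f x‖ < 1) :
    LipschitzWith 1 f :=
  lipschitzWith_of_nnnorm_fderiv_le (hf.differentiable one_ne_zero)
    (fun x => by exact_mod_cast (hgrad x).le)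

lemma f_sub_le (f : E2 → ℝ) (hlip : LipschitzWith 1 f) (a b : E2) : f a - f b ≤ ‖a - b‖ := by
  have := hlip.dist_le_mul a b
  rw [Real.dist_eq, dist_eq_norm] at this
  calc f a - f b ≤ |f a - f b| := le_abs_self _
  _ ≤ ‖a - b‖ := by simpa using this

lemma nonattain (f : E2 → ℝ) (hf : ContDiff ℝ 1 f) (hgrad : ∀ x : E2, ‖fderiv ℝ f x‖ < 1)
    (ξ : E2) (hξ : ‖ξ‖ = 1) (cc : ℝ) (h : ∀ y, (inner ℝ y ξ : ℝ) - f y ≤ cc) :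
    ∀ y, (inner ℝ y ξ : ℝ) - f y < cc := by
  intro y₀
  rcases lt_or_eq_of_le (h y₀) with h' | h'
  · exact h'
  exfalso
  have hmax : IsLocalMax (fun y : E2 => (inner ℝ y ξ : ℝ) - f y) y₀ :=
    Filter.Eventually.of_forall fun y => by
      show (inner ℝ y ξ : ℝ) - f y ≤ (inner ℝ y₀ ξ : ℝ) - f y₀
      rw [h']; exact h y
  have h1 : HasFDerivAt (fun y : E2 => (inner ℝ y ξ : ℝ)) (innerSL ℝ ξ) y₀ := by
    have he : (fun y : E2 => (inner ℝ y ξ : ℝ)) = fun y => (innerSL ℝ ξ) y := by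
      funext y
      rw [innerSL_apply_apply]
      exact (real_inner_comm y ξ).symm
    rw [he]
    exact (innerSL ℝ ξ).hasFDerivAt
  have hd : HasFDerivAt (fun y : E2 => (inner ℝ y ξ : ℝ) - f y)
      (innerSL ℝ ξ - fderiv ℝ f y₀) y₀ :=
    h1.sub (hf.differentiable one_ne_zero y₀).hasFDerivAt
  have h0 := hmax.hasFDerivAt_eq_zero hd
  rw [sub_eq_zero] at h0
  have := hgrad y₀
  rw [← h0, innerSL_apply_norm, hξ] at this
  exact lt_irrefl _ this

lemma unit_close (u v : E2) (ε : ℝ) (hε : 0 ≤ ε) (hu : 1 ≤ ‖u‖) (hv : 1 ≤ ‖v‖)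
    (hD : ‖v - u‖ ≤ ‖v‖ - ‖u‖ + ε) :
    ‖‖u‖⁻¹ • u - ‖v‖⁻¹ • v‖ ≤ Real.sqrt (2 * ε + ε ^ 2) := by
  have hA : (0:ℝ) < ‖u‖ := lt_of_lt_of_le one_pos hu
  have hB : (0:ℝ) < ‖v‖ := lt_of_lt_of_le one_pos hv
  have hI : ‖u‖ * ‖v‖ - ε * ‖v‖ - ε ^ 2 / 2 ≤ ⟪u, v⟫_ℝ := by
    have h1 : ‖v - u‖ ^ 2 ≤ (‖v‖ - ‖u‖ + ε) ^ 2 := by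
      apply pow_le_pow_left₀ (norm_nonneg _) hD
    have h2 : ‖v - u‖ ^ 2 = ‖v‖ ^ 2 - 2 * ⟪v, u⟫_ℝ + ‖u‖ ^ 2 := norm_sub_sq_real v u
    have h3 : ⟪v, u⟫_ℝ = ⟪u, v⟫_ℝ := real_inner_comm u v
    have h4 : ‖v‖ ^ 2 - 2 * ⟪u, v⟫_ℝ + ‖u‖ ^ 2 ≤ (‖v‖ - ‖u‖ + ε) ^ 2 := by
      rw [← h3, ← h2]; exact h1
    nlinarith [h4, mul_nonneg hε hA.le]
  have hsq : ‖‖u‖⁻¹ • u - ‖v‖⁻¹ • v‖ ^ 2 = 2 - 2 * (‖u‖⁻¹ * (‖v‖⁻¹ * ⟪u, v⟫_ℝ)) := by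
    rw [norm_sub_sq_real, inner_smul_left, inner_smul_right]
    rw [norm_smul, norm_smul, norm_inv, norm_norm, norm_inv, norm_norm]
    simp only [RCLike.ofReal_real_eq_id, id_eq, conj_trivial]
    field_simp
    ring
  have hle : ‖‖u‖⁻¹ • u - ‖v‖⁻¹ • v‖ ^ 2 ≤ 2 * ε + ε ^ 2 := by
    rw [hsq]
    have hABpos : (0:ℝ) < ‖u‖ * ‖v‖ := mul_pos hA hB
    have key : 2 * (‖u‖ * ‖v‖) - 2 * ⟪u, v⟫_ℝ ≤ (2 * ε + ε ^ 2) * (‖u‖ * ‖v‖) := by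
      nlinarith [hI, mul_le_mul_of_nonneg_left hu hε, mul_le_mul_of_nonneg_left hv hε,
        mul_nonneg (mul_nonneg hε hε) hABpos.le]
    have hrw : (2 - 2 * (‖u‖⁻¹ * (‖v‖⁻¹ * ⟪u, v⟫_ℝ))) * (‖u‖ * ‖v‖)
        = 2 * (‖u‖ * ‖v‖) - 2 * ⟪u, v⟫_ℝ := by
      field_simp
    nlinarith [key, hrw, hABpos]
  calc ‖‖u‖⁻¹ • u - ‖v‖⁻¹ • v‖ = Real.sqrt (‖‖u‖⁻¹ • u - ‖v‖⁻¹ • v‖ ^ 2) :=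
        (Real.sqrt_sq (norm_nonneg _)).symm
  _ ≤ Real.sqrt (2 * ε + ε ^ 2) := Real.sqrt_le_sqrt hle

lemma unit_shift (u v : E2) (hu : u ≠ 0) (hv : v ≠ 0) :
    ‖‖u‖⁻¹ • u - ‖v‖⁻¹ • v‖ ≤ 2 * ‖u - v‖ / ‖u‖ := by
  have hA : (0:ℝ) < ‖u‖ := norm_pos_iff.2 hu
  have hB : (0:ℝ) < ‖v‖ := norm_pos_iff.2 hv
  have hdec : ‖u‖⁻¹ • u - ‖v‖⁻¹ • v = ‖u‖⁻¹ • (u - v) + (‖u‖⁻¹ - ‖v‖⁻¹) • v := by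
    module
  rw [hdec]
  have h1 : ‖‖u‖⁻¹ • (u - v)‖ = ‖u - v‖ / ‖u‖ := by
    rw [norm_smul, norm_inv, norm_norm]; ring
  have h2 : ‖(‖u‖⁻¹ - ‖v‖⁻¹) • v‖ ≤ ‖u - v‖ / ‖u‖ := by
    rw [norm_smul, Real.norm_eq_abs]
    have e1 : ‖u‖⁻¹ - ‖v‖⁻¹ = (‖v‖ - ‖u‖) / (‖u‖ * ‖v‖) := by field_simp
    rw [e1, abs_div, abs_of_pos (mul_pos hA hB)]
    have e2 : |‖v‖ - ‖u‖| / (‖u‖ * ‖v‖) * ‖v‖ = |‖v‖ - ‖u‖| / ‖u‖ := by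
      field_simp
    rw [e2]
    have h3 : |‖v‖ - ‖u‖| ≤ ‖u - v‖ := by
      rw [abs_sub_comm]
      exact abs_norm_sub_norm_le u v
    gcongr
  calc ‖‖u‖⁻¹ • (u - v) + (‖u‖⁻¹ - ‖v‖⁻¹) • v‖
      ≤ ‖‖u‖⁻¹ • (u - v)‖ + ‖(‖u‖⁻¹ - ‖v‖⁻¹) • v‖ := norm_add_le _ _
  _ ≤ ‖u - v‖ / ‖u‖ + ‖u - v‖ / ‖u‖ := by rw [h1]; exact add_le_add le_rfl h2
  _ = 2 * ‖u - v‖ / ‖u‖ := by ring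
lemma curve_dist (c : ℝ → E2) (hc : LipschitzWith 1 c) (a b : ℝ) :
    ‖c a - c b‖ ≤ |a - b| := by
  have := hc.dist_le_mul a b
  rw [Real.dist_eq, dist_eq_norm] at this
  simpa using this

set_option maxHeartbeats 1000000 in
lemma main_lemma (f : E2 → ℝ) (hf : ContDiff ℝ 1 f) (hgrad : ∀ x : E2, ‖fderiv ℝ f x‖ < 1)
    (c : ℝ → E2) (hc : LipschitzWith 1 c) (s : ℝ) (hcur : ∀ t, t < f (c t)) :
    ∃ ξ : E2, ‖ξ‖ = 1 ∧ ∃ L : ℝ, s ≤ L ∧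
      ∀ y, (inner ℝ y ξ : ℝ) - f y < (inner ℝ (c s) ξ : ℝ) - L := by
  have hlip : LipschitzWith 1 f := lip_of_grad f hf hgrad
  set x₀ := c s with hx₀
  set a : ℝ → ℝ := fun t => t - ‖c t - x₀‖ with ha
  have amono : Monotone a := by
    intro t₁ t₂ h
    have h1 : ‖c t₂ - x₀‖ - ‖c t₁ - x₀‖ ≤ ‖c t₂ - c t₁‖ := by
      have := norm_sub_norm_le (c t₂ - x₀) (c t₁ - x₀)
      simpa using this
    have h2 : ‖c t₂ - c t₁‖ ≤ t₂ - t₁ := by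
      have := curve_dist c hc t₂ t₁
      rwa [abs_of_nonneg (by linarith)] at this
    simp only [a]
    linarith
  have habove : ∀ t, a t ≤ f x₀ := by
    intro t
    have h1 := hcur t
    have h2 := f_sub_le f hlip (c t) x₀
    simp only [a]
    linarith
  have hbdd : BddAbove (range a) := ⟨f x₀, by rintro _ ⟨t, rfl⟩; exact habove t⟩
  set L : ℝ := ⨆ t, a t with hL
  have haL : ∀ t, a t ≤ L := fun t => le_ciSup hbdd t
  have hsL : s ≤ L := by
    have : a s = s := by simp [a, hx₀]
    linarith [haL s, le_ciSup hbdd s, this ▸ le_ciSup hbdd s]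
  have htendL : Tendsto a atTop (𝓝 L) := tendsto_atTop_ciSup amono hbdd
  -- the sequence of points going to infinity
  set T : ℕ → ℝ := fun n => (L + 1) + n with hT
  have hTmono : Monotone T := by
    intro m n h
    simp only [T]
    have : (m:ℝ) ≤ n := Nat.cast_le.2 h
    linarith
  have hTtop : Tendsto T atTop atTop :=
    tendsto_atTop_add_const_left _ _ tendsto_natCast_atTop_atTop
  set u : ℕ → E2 := fun n => c (T n) - x₀ with hu
  have hnormu : ∀ n, ‖u n‖ = T n - a (T n) := by
    intro n; simp only [a, u]; ring
  have hularge : ∀ n : ℕ, 1 + (n:ℝ) ≤ ‖u n‖ := by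
    intro n
    rw [hnormu n]
    have := haL (T n)
    simp only [T]
    linarith
  have huone : ∀ n : ℕ, 1 ≤ ‖u n‖ := fun n => by
    have := hularge n
    have : (0:ℝ) ≤ n := Nat.cast_nonneg n
    linarith [hularge n]
  have hune : ∀ n, u n ≠ 0 := fun n => by
    intro h0
    have := huone n
    rw [h0, norm_zero] at this
    linarith
  set ε : ℕ → ℝ := fun n => L - a (T n) with hε
  have hεnn : ∀ n, 0 ≤ ε n := fun n => by simp only [ε]; linarith [haL (T n)]
  have hεanti : Antitone ε := fun m n h => by
    simp only [ε]; have := amono (hTmono h); linarith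
  have hεtend : Tendsto ε atTop (𝓝 0) := by
    have := (tendsto_const_nhds (x := L) (f := atTop (α := ℕ))).sub (htendL.comp hTtop)
    simpa using this
  set ξs : ℕ → E2 := fun n => ‖u n‖⁻¹ • u n with hξs
  have hdiff : ∀ m n : ℕ, m ≤ n → ‖u n - u m‖ ≤ ‖u n‖ - ‖u m‖ + ε m := by
    intro m n h
    have h1 : ‖u n - u m‖ ≤ T n - T m := by
      have h2 : u n - u m = c (T n) - c (T m) := by simp only [u]; abel
      rw [h2]
      have := curve_dist c hc (T n) (T m)
      rwa [abs_of_nonneg (by linarith [hTmono h])] at this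
    have h3 := hnormu n
    have h4 := hnormu m
    have h5 := haL (T n)
    simp only [ε]
    linarith
  have hcauchy : CauchySeq ξs := by
    apply cauchySeq_of_le_tendsto_0 (fun n => Real.sqrt (2 * ε n + ε n ^ 2))
    · intro n m N hn hm
      rcases le_total n m with h | h
      · calc dist (ξs n) (ξs m) = ‖ξs n - ξs m‖ := dist_eq_norm _ _
        _ ≤ Real.sqrt (2 * ε n + ε n ^ 2) :=
            unit_close (u n) (u m) (ε n) (hεnn n) (huone n) (huone m) (hdiff n m h)
        _ ≤ Real.sqrt (2 * ε N + ε N ^ 2) := by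
            have h1 := hεanti hn
            have h2 := hεnn n
            apply Real.sqrt_le_sqrt
            nlinarith
      · calc dist (ξs n) (ξs m) = ‖ξs n - ξs m‖ := dist_eq_norm _ _
        _ = ‖ξs m - ξs n‖ := norm_sub_rev _ _
        _ ≤ Real.sqrt (2 * ε m + ε m ^ 2) :=
            unit_close (u m) (u n) (ε m) (hεnn m) (huone m) (huone n) (hdiff m n h)
        _ ≤ Real.sqrt (2 * ε N + ε N ^ 2) := by
            have h1 := hεanti hm
            have h2 := hεnn m
            apply Real.sqrt_le_sqrt
            nlinarith
    · have h0 : Tendsto (fun n => 2 * ε n + ε n ^ 2) atTop (𝓝 0) := by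
        have := (hεtend.const_mul 2).add (hεtend.pow 2)
        simpa using this
      have := (Real.continuous_sqrt.tendsto 0).comp h0
      simpa [Function.comp_def] using this
  obtain ⟨ξ, hξlim⟩ := cauchySeq_tendsto_of_complete hcauchy
  have hξnorm : ‖ξ‖ = 1 := by
    have h1 : Tendsto (fun n => ‖ξs n‖) atTop (𝓝 ‖ξ‖) := hξlim.norm
    have h2 : ∀ n, ‖ξs n‖ = 1 := by
      intro n
      simp only [ξs]
      rw [norm_smul, norm_inv, norm_norm]
      exact inv_mul_cancel₀ (norm_ne_zero_iff.2 (hune n))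
    rw [funext h2] at h1
    exact (tendsto_nhds_unique h1 tendsto_const_nhds)
  refine ⟨ξ, hξnorm, L, hsL, ?_⟩
  apply nonattain f hf hgrad ξ hξnorm
  intro y
  set w : E2 := y - x₀ with hw
  -- pointwise bound along the sequence
  have hq : ∀ n, a (T n) + (‖u n‖ - ‖u n - w‖) ≤ f y := by
    intro n
    have h1 := hcur (T n)
    have h2 := f_sub_le f hlip (c (T n)) y
    have h3 : c (T n) - y = u n - w := by simp only [u, w]; abel
    rw [h3] at h2
    have h4 := hnormu n
    linarith
  -- the middle term tends to ⟪ξ, w⟫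
  have hξsnorm : ∀ n, ‖ξs n‖ = 1 := by
    intro n
    simp only [ξs]
    rw [norm_smul, norm_inv, norm_norm]
    exact inv_mul_cancel₀ (norm_ne_zero_iff.2 (hune n))
  have hmid : Tendsto (fun n => ‖u n‖ - ‖u n - w‖) atTop (𝓝 (inner ℝ ξ w : ℝ)) := by
    set vs : ℕ → E2 := fun n => ‖u n - w‖⁻¹ • (u n - w) with hvs
    have hNtend : Tendsto (fun n : ℕ => 1 + (n:ℝ)) atTop atTop :=
      tendsto_atTop_add_const_left _ _ tendsto_natCast_atTop_atTop
    have hev : ∀ᶠ n : ℕ in atTop, ‖w‖ < 1 + (n:ℝ) := hNtend.eventually_gt_atTop ‖w‖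
    have hvne : ∀ n : ℕ, ‖w‖ < 1 + (n:ℝ) → u n - w ≠ 0 := by
      intro n hn h0
      rw [sub_eq_zero] at h0
      have h1 := hularge n
      rw [h0] at h1
      linarith
    have hup : ∀ n, ‖u n‖ - ‖u n - w‖ ≤ (inner ℝ (ξs n) w : ℝ) := by
      intro n
      have c1 : (inner ℝ (ξs n) (u n) : ℝ) = ‖u n‖ := by
        simp only [ξs]
        rw [real_inner_smul_left, real_inner_self_eq_norm_sq]
        have h0 : ‖u n‖ ≠ 0 := norm_ne_zero_iff.2 (hune n)
        field_simp
      have c2 : (inner ℝ (ξs n) (u n - w) : ℝ) ≤ ‖u n - w‖ := by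
        calc (inner ℝ (ξs n) (u n - w) : ℝ) ≤ ‖ξs n‖ * ‖u n - w‖ := real_inner_le_norm _ _
        _ = ‖u n - w‖ := by rw [hξsnorm n, one_mul]
      have c3 : (inner ℝ (ξs n) (u n - w) : ℝ) = (inner ℝ (ξs n) (u n) : ℝ) - (inner ℝ (ξs n) w : ℝ) :=
        inner_sub_right _ _ _
      linarith
    have hlow : ∀ n : ℕ, ‖w‖ < 1 + (n:ℝ) → (inner ℝ (vs n) w : ℝ) ≤ ‖u n‖ - ‖u n - w‖ := by
      intro n hn
      have hne := hvne n hn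
      have hvsnorm : ‖vs n‖ = 1 := by
        simp only [vs]
        rw [norm_smul, norm_inv, norm_norm]
        exact inv_mul_cancel₀ (norm_ne_zero_iff.2 hne)
      have c1 : (inner ℝ (vs n) (u n - w) : ℝ) = ‖u n - w‖ := by
        simp only [vs]
        rw [real_inner_smul_left, real_inner_self_eq_norm_sq]
        have h0 : ‖u n - w‖ ≠ 0 := norm_ne_zero_iff.2 hne
        field_simp
      have c2 : (inner ℝ (vs n) (u n) : ℝ) ≤ ‖u n‖ := by
        calc (inner ℝ (vs n) (u n) : ℝ) ≤ ‖vs n‖ * ‖u n‖ := real_inner_le_norm _ _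
        _ = ‖u n‖ := by rw [hvsnorm, one_mul]
      have c3 : (inner ℝ (vs n) (u n - w) : ℝ) = (inner ℝ (vs n) (u n) : ℝ) - (inner ℝ (vs n) w : ℝ) :=
        inner_sub_right _ _ _
      linarith
    have hvtend : Tendsto vs atTop (𝓝 ξ) := by
      have hd0 : Tendsto (fun n => vs n - ξs n) atTop (𝓝 0) := by
        rw [tendsto_zero_iff_norm_tendsto_zero]
        apply squeeze_zero' (Eventually.of_forall fun n => norm_nonneg _)
          (g := fun n : ℕ => 2 * ‖w‖ * (1 / ((n:ℝ) + 1)))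
        · filter_upwards [hev] with n hn
          have hne := hvne n hn
          have h1 : ‖vs n - ξs n‖ = ‖ξs n - vs n‖ := norm_sub_rev _ _
          have h2 := unit_shift (u n) (u n - w) (hune n) hne
          have h3 : u n - (u n - w) = w := by abel
          rw [h3] at h2
          have h4 : 2 * ‖w‖ / ‖u n‖ ≤ 2 * ‖w‖ * (1 / ((n:ℝ) + 1)) := by
            rw [mul_one_div, div_le_div_iff₀ (lt_of_lt_of_le one_pos (huone n)) (by positivity)]
            have := hularge n
            nlinarith [norm_nonneg w]
          rw [h1]
          exact h2.trans h4
        · have h5 : Tendsto (fun n : ℕ => (1:ℝ) / ((n:ℝ) + 1)) atTop (𝓝 0) :=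
            tendsto_one_div_add_atTop_nhds_zero_nat
          have := h5.const_mul (2 * ‖w‖)
          simpa using this
      have := hd0.add hξlim
      simpa using this
    have htup : Tendsto (fun n => (inner ℝ (ξs n) w : ℝ)) atTop (𝓝 (inner ℝ ξ w : ℝ)) :=
      hξlim.inner tendsto_const_nhds
    have htlow : Tendsto (fun n => (inner ℝ (vs n) w : ℝ)) atTop (𝓝 (inner ℝ ξ w : ℝ)) :=
      hvtend.inner tendsto_const_nhds
    apply tendsto_of_tendsto_of_tendsto_of_le_of_le' htlow htup
    · filter_upwards [hev] with n hn
      exact hlow n hn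
    · exact Eventually.of_forall hup
  have hlim : Tendsto (fun n => a (T n) + (‖u n‖ - ‖u n - w‖)) atTop
      (𝓝 (L + (inner ℝ ξ w : ℝ))) := (htendL.comp hTtop).add hmid
  have hfy : L + (inner ℝ ξ w : ℝ) ≤ f y := le_of_tendsto hlim (Eventually.of_forall hq)
  have hinner : (inner ℝ ξ w : ℝ) = (inner ℝ y ξ : ℝ) - (inner ℝ x₀ ξ : ℝ) := by
    rw [real_inner_comm w ξ]
    simp only [w]
    rw [inner_sub_left]
  rw [hinner] at hfy
  linarith
def Aplus (f : E2 → ℝ) : Set M3 :=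
  {p | ∀ ξ : E2, ‖ξ‖ = 1 → ∀ cc : ℝ, (∀ y, (inner ℝ y ξ : ℝ) - f y < cc) →
    (inner ℝ p.1 ξ : ℝ) - p.2 < cc}

def Aminus (f : E2 → ℝ) : Set M3 :=
  {p | ∀ ξ : E2, ‖ξ‖ = 1 → ∀ cc : ℝ, (∀ y, cc < (inner ℝ y ξ : ℝ) - f y) →
    cc < (inner ℝ p.1 ξ : ℝ) - p.2}

lemma isOpen_Aplus (f : E2 → ℝ) (hf : ContDiff ℝ 1 f)
    (hgrad : ∀ x : E2, ‖fderiv ℝ f x‖ < 1) : IsOpen (Aplus f) := by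
  rw [Metric.isOpen_iff]
  intro p hp
  have key : ∃ δ : ℝ, 0 < δ ∧ ∀ ξ : E2, ‖ξ‖ = 1 → ∀ cc : ℝ,
      (∀ y, (inner ℝ y ξ : ℝ) - f y < cc) → (inner ℝ p.1 ξ : ℝ) - p.2 + δ ≤ cc := by
    by_contra hcon
    push_neg at hcon
    have hchoice : ∀ n : ℕ, ∃ ξ : E2, ‖ξ‖ = 1 ∧ ∃ cc : ℝ,
        (∀ y, (inner ℝ y ξ : ℝ) - f y < cc) ∧ cc < (inner ℝ p.1 ξ : ℝ) - p.2 + 1 / ((n:ℝ) + 1) := by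
      intro n
      obtain ⟨ξ, hξ, cc, hS, hlt⟩ := hcon (1 / ((n:ℝ) + 1)) (by positivity)
      exact ⟨ξ, hξ, cc, hS, hlt⟩
    choose ξn hξn ccn hSn hltn using hchoice
    have hmem : ∀ n, ξn n ∈ Metric.sphere (0 : E2) 1 := fun n =>
      mem_sphere_zero_iff_norm.2 (hξn n)
    obtain ⟨z, hz, φ, hφ, hconv⟩ := (isCompact_sphere (0 : E2) 1).tendsto_subseq hmem
    have hz1 : ‖z‖ = 1 := mem_sphere_zero_iff_norm.1 hz
    have hle : ∀ y, (inner ℝ y z : ℝ) - f y ≤ (inner ℝ p.1 z : ℝ) - p.2 := by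
      intro y
      have h1 : ∀ n : ℕ, (inner ℝ y (ξn (φ n)) : ℝ) - f y
          ≤ (inner ℝ p.1 (ξn (φ n)) : ℝ) - p.2 + 1 / ((φ n : ℝ) + 1) :=
        fun n => le_of_lt ((hSn (φ n) y).trans (hltn (φ n)))
      have t1 : Tendsto (fun n => (inner ℝ y (ξn (φ n)) : ℝ) - f y) atTop
          (𝓝 ((inner ℝ y z : ℝ) - f y)) :=
        (Filter.Tendsto.inner tendsto_const_nhds hconv).sub tendsto_const_nhds
      have hφtop : Tendsto (fun n => (φ n : ℝ)) atTop atTop :=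
        tendsto_natCast_atTop_atTop.comp hφ.tendsto_atTop
      have t0 : Tendsto (fun n => 1 / ((φ n : ℝ) + 1)) atTop (𝓝 0) := by
        simp only [one_div]
        exact Tendsto.comp tendsto_inv_atTop_zero
          (tendsto_atTop_add_const_right _ _ hφtop)
      have t2 : Tendsto (fun n => (inner ℝ p.1 (ξn (φ n)) : ℝ) - p.2 + 1 / ((φ n : ℝ) + 1)) atTop
          (𝓝 ((inner ℝ p.1 z : ℝ) - p.2)) := by
        have ha : Tendsto (fun n => (inner ℝ p.1 (ξn (φ n)) : ℝ)) atTop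
            (𝓝 (inner ℝ p.1 z : ℝ)) :=
          Filter.Tendsto.inner (tendsto_const_nhds (x := p.1)) hconv
        have := (ha.sub (tendsto_const_nhds (x := p.2))).add t0
        simpa using this
      exact le_of_tendsto_of_tendsto' t1 t2 h1
    have hstrict := nonattain f hf hgrad z hz1 _ hle
    exact absurd (hp z hz1 _ hstrict) (lt_irrefl _)
  obtain ⟨δ, hδ, hkey⟩ := key
  refine ⟨δ / 2, by positivity, ?_⟩
  intro q hq
  rw [Metric.mem_ball] at hq
  intro ξ hξ cc hS
  have h1 := hkey ξ hξ cc hS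
  have h2 : (inner ℝ (q.1 - p.1) ξ : ℝ) ≤ ‖q.1 - p.1‖ := by
    calc (inner ℝ (q.1 - p.1) ξ : ℝ) ≤ ‖q.1 - p.1‖ * ‖ξ‖ := real_inner_le_norm _ _
    _ = ‖q.1 - p.1‖ := by rw [hξ, mul_one]
  have h3 : ‖q.1 - p.1‖ ≤ dist q p := by
    rw [Prod.dist_eq, ← dist_eq_norm]
    exact le_max_left _ _
  have h4 : |q.2 - p.2| ≤ dist q p := by
    rw [Prod.dist_eq, ← Real.dist_eq]
    exact le_max_right _ _
  have h5 : (inner ℝ q.1 ξ : ℝ) - (inner ℝ p.1 ξ : ℝ) = (inner ℝ (q.1 - p.1) ξ : ℝ) :=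
    (inner_sub_left _ _ _).symm
  have h6 : p.2 - q.2 ≤ |q.2 - p.2| := by
    rw [abs_sub_comm]
    exact le_abs_self _
  linarith
lemma neg_grad (f : E2 → ℝ) (hgrad : ∀ x : E2, ‖fderiv ℝ f x‖ < 1) :
    ∀ x : E2, ‖fderiv ℝ (fun y => -f y) x‖ < 1 := by
  intro x
  have : fderiv ℝ (fun y => -f y) x = -fderiv ℝ f x := fderiv_neg
  rw [this, norm_neg]
  exact hgrad x

lemma aminus_eq (f : E2 → ℝ) :
    Aminus f = (fun p : M3 => (p.1, -p.2)) ⁻¹' Aplus (fun y => -f y) := by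
  ext p
  constructor
  · intro hp ξ hξ cc hS
    simp only at hS ⊢
    have hS' : ∀ y, (-cc : ℝ) < (inner ℝ y (-ξ) : ℝ) - f y := by
      intro y
      have := hS y
      rw [inner_neg_right]
      linarith
    have := hp (-ξ) (by rw [norm_neg]; exact hξ) (-cc) hS'
    rw [inner_neg_right] at this
    linarith
  · intro hp ξ hξ cc hS
    have hS' : ∀ y, (inner ℝ y (-ξ) : ℝ) - (-f y) < -cc := by
      intro y
      have := hS y
      rw [inner_neg_right]
      linarith
    have := hp (-ξ) (by rw [norm_neg]; exact hξ) (-cc) hS'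
    simp only [inner_neg_right] at this
    linarith

lemma isOpen_Aminus (f : E2 → ℝ) (hf : ContDiff ℝ 1 f)
    (hgrad : ∀ x : E2, ‖fderiv ℝ f x‖ < 1) : IsOpen (Aminus f) := by
  rw [aminus_eq]
  exact (isOpen_Aplus _ hf.neg (neg_grad f hgrad)).preimage
    (continuous_fst.prodMk continuous_snd.neg)

lemma lip_neg_curve : LipschitzWith 1 (fun t : ℝ => -t) :=
  LipschitzWith.of_dist_le_mul fun a b => by
    rw [Real.dist_eq, Real.dist_eq, NNReal.coe_one, one_mul, neg_sub_neg, abs_sub_comm]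


/-- the domain of dependence of an entire spacelike graph is open
and equals the intersection of all open null half-spaces containing the graph
(the empty intersection being all of ℝ³). -/
theorem domain_of_dependence_eq_inter_null_halfspaces
    (f : E2 → ℝ) (hf : ContDiff ℝ 1 f) (hgrad : ∀ x : E2, ‖fderiv ℝ f x‖ < 1)
    (Sig : Set M3) (hSig : Sig = {p : M3 | p.2 = f p.1})
    (DD : Set M3)
    (hDD : DD = {p : M3 | ∀ c : ℝ → E2, LipschitzWith 1 c → c p.2 = p.1 →
      ∃ t : ℝ, f (c t) = t}) :
    IsOpen DD ∧
    DD = ⋂₀ {H : Set M3 | (∃ ξ ∈ S1, ∃ cc : ℝ,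
        H = {x : M3 | (inner ℝ x.1 ξ : ℝ) - x.2 < cc} ∨
        H = {x : M3 | cc < (inner ℝ x.1 ξ : ℝ) - x.2}) ∧ Sig ⊆ H} := by

  subst hSig hDD
  -- Step 1: DD = Aplus f ∩ Aminus f
  have hEq : {p : M3 | ∀ c : ℝ → E2, LipschitzWith 1 c → c p.2 = p.1 →
      ∃ t : ℝ, f (c t) = t} = Aplus f ∩ Aminus f := by
    ext p
    constructor
    · intro hp
      constructor
      · intro ξ hξ cc hS
        by_contra hge
        push_neg at hge
        set γ : ℝ → E2 := fun t => p.1 + (t - p.2) • ξ with hγ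
        have hγlip : LipschitzWith 1 γ := by
          apply LipschitzWith.of_dist_le_mul
          intro a b
          rw [dist_eq_norm, Real.dist_eq, NNReal.coe_one, one_mul]
          have : γ a - γ b = (a - b) • ξ := by
            simp only [γ]
            module
          rw [this, norm_smul, Real.norm_eq_abs, hξ, mul_one]
        have hγp : γ p.2 = p.1 := by simp [γ]
        obtain ⟨t, ht⟩ := hp γ hγlip hγp
        have hin : (inner ℝ (γ t) ξ : ℝ) = (inner ℝ p.1 ξ : ℝ) + (t - p.2) := by
          simp only [γ]
          rw [inner_add_left, real_inner_smul_left, real_inner_self_eq_norm_sq, hξ]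
          ring
        have := hS (γ t)
        rw [ht, hin] at this
        linarith
      · intro ξ hξ cc hS
        by_contra hge
        push_neg at hge
        set γ : ℝ → E2 := fun t => p.1 + (t - p.2) • ξ with hγ
        have hγlip : LipschitzWith 1 γ := by
          apply LipschitzWith.of_dist_le_mul
          intro a b
          rw [dist_eq_norm, Real.dist_eq, NNReal.coe_one, one_mul]
          have : γ a - γ b = (a - b) • ξ := by
            simp only [γ]
            module
          rw [this, norm_smul, Real.norm_eq_abs, hξ, mul_one]
        have hγp : γ p.2 = p.1 := by simp [γ]
        obtain ⟨t, ht⟩ := hp γ hγlip hγp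
        have hin : (inner ℝ (γ t) ξ : ℝ) = (inner ℝ p.1 ξ : ℝ) + (t - p.2) := by
          simp only [γ]
          rw [inner_add_left, real_inner_smul_left, real_inner_self_eq_norm_sq, hξ]
          ring
        have := hS (γ t)
        rw [ht, hin] at this
        linarith
    · rintro ⟨hp1, hp2⟩ c hc hcp
      by_contra hno
      push_neg at hno
      have hcont : Continuous fun t => f (c t) - t :=
        (hf.continuous.comp hc.continuous).sub continuous_id
      have hdichot : (∀ t, t < f (c t)) ∨ (∀ t, f (c t) < t) := by
        by_cases hpos : ∀ t, t < f (c t)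
        · exact Or.inl hpos
        · push_neg at hpos
          obtain ⟨t₀, ht₀⟩ := hpos
          have ht₀' : f (c t₀) < t₀ := lt_of_le_of_ne ht₀ (hno t₀)
          right
          intro t
          rcases lt_or_ge (f (c t)) t with h | h
          · exact h
          exfalso
          have ht' : t < f (c t) := lt_of_le_of_ne h (fun he => hno t he.symm)
          have hmem : (0:ℝ) ∈ uIcc (f (c t) - t) (f (c t₀) - t₀) := by
            rw [Set.mem_uIcc]
            right
            constructor <;> linarith
          obtain ⟨r, _, hr⟩ := intermediate_value_uIcc (hcont.continuousOn) hmem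
          exact hno r (by linarith [hr, sub_eq_zero.1 hr])
      rcases hdichot with hpos | hneg
      · obtain ⟨ξ, hξ, L, hsL, hstrict⟩ := main_lemma f hf hgrad c hc p.2 hpos
        rw [hcp] at hstrict
        have := hp1 ξ hξ _ hstrict
        linarith
      · have hcur' : ∀ t, t < (fun y => -f y) ((fun t => c (-t)) t) := by
          intro t
          have := hneg (-t)
          simp only []
          linarith
        obtain ⟨ξ, hξ, L, hsL, hstrict⟩ := main_lemma (fun y => -f y) hf.neg
          (neg_grad f hgrad) (fun t => c (-t))
          (by have h := hc.comp lip_neg_curve; rw [mul_one] at h; exact h) (-p.2) hcur'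
        simp only [neg_neg] at hstrict
        rw [hcp] at hstrict
        have hS' : ∀ y, (L - (inner ℝ p.1 ξ : ℝ)) < (inner ℝ y (-ξ) : ℝ) - f y := by
          intro y
          have := hstrict y
          rw [inner_neg_right]
          linarith
        have := hp2 (-ξ) (by rw [norm_neg]; exact hξ) _ hS'
        rw [inner_neg_right] at this
        linarith
  -- Step 2: the sInter equals Aplus ∩ Aminus
  have hInter : ⋂₀ {H : Set M3 | (∃ ξ ∈ S1, ∃ cc : ℝ,
      H = {x : M3 | (inner ℝ x.1 ξ : ℝ) - x.2 < cc} ∨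
      H = {x : M3 | cc < (inner ℝ x.1 ξ : ℝ) - x.2}) ∧
      {p : M3 | p.2 = f p.1} ⊆ H} = Aplus f ∩ Aminus f := by
    ext p
    rw [mem_sInter]
    constructor
    · intro h
      constructor
      · intro ξ hξ cc hS
        exact h {x : M3 | (inner ℝ x.1 ξ : ℝ) - x.2 < cc}
          ⟨⟨ξ, mem_sphere_zero_iff_norm.2 hξ, cc, Or.inl rfl⟩, by
            intro q hq
            simp only [mem_setOf_eq] at hq ⊢
            rw [hq]
            exact hS q.1⟩
      · intro ξ hξ cc hS
        exact h {x : M3 | cc < (inner ℝ x.1 ξ : ℝ) - x.2}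
          ⟨⟨ξ, mem_sphere_zero_iff_norm.2 hξ, cc, Or.inr rfl⟩, by
            intro q hq
            simp only [mem_setOf_eq] at hq ⊢
            rw [hq]
            exact hS q.1⟩
    · rintro ⟨hp1, hp2⟩ H ⟨⟨ξ, hξS, cc, hH⟩, hsub⟩
      have hξ : ‖ξ‖ = 1 := mem_sphere_zero_iff_norm.1 hξS
      rcases hH with rfl | rfl
      · exact hp1 ξ hξ cc fun y => hsub (show ((y, f y) : M3) ∈ _ from rfl)
      · exact hp2 ξ hξ cc fun y => hsub (show ((y, f y) : M3) ∈ _ from rfl)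
  constructor
  · rw [hEq]
    exact (isOpen_Aplus f hf hgrad).inter (isOpen_Aminus f hf hgrad)
  · rw [hEq, hInter]


end
end

section
/- Let γ : [0, ∞) → ℝ² be a differentiable curve, and suppose there are differentiable maps T, N : [0, ∞) → ℝ² and continuous functions ν, κ : [0, ∞) → (0, ∞) such that, with respect to the bilinear form q(v, w) = v₁w₁ − v₂w₂ on ℝ²: q(T(r), T(r)) = 1, q(N(r), N(r)) = −1 and q(T(r), N(r)) = 0 for all r; γ'(r) = ν(r)·T(r); T'(r) = κ(r)ν(r)·N(r); and N'(r) = κ(r)ν(r)·T(r). If ∫₀^∞ exp(∫₀^r κ(s)ν(s) ds)·ν(r) dr = +∞, then γ is proper, i.e. ‖γ(r)‖ → +∞ (in the Euclidean norm) as r → +∞. -/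
open Set MeasureTheory
open scoped Topology ENNReal

noncomputable section

lemma myConstOn (f : ℝ → ℝ) (hf : ∀ x ∈ Ici (0:ℝ), HasDerivWithinAt f 0 (Ici 0) x)
    {r : ℝ} (hr : 0 ≤ r) : f r = f 0 := by
  have hcont : ContinuousOn f (Icc 0 r) := fun x hx =>
    ((hf x hx.1).continuousWithinAt).mono (fun y hy => (hy.1 : (0:ℝ) ≤ y))
  exact constant_of_has_deriv_right_zero hcont
    (fun x hx => (hf x hx.1).mono (Ici_subset_Ici.2 hx.1)) r (right_mem_Icc.2 hr)

lemma myCoordBound (x : EuclideanSpace ℝ (Fin 2)) (i : Fin 2) : |x i| ≤ ‖x‖ := by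
  have h := EuclideanSpace.norm_eq x
  rw [Fin.sum_univ_two] at h
  rw [h, ← Real.sqrt_sq_eq_abs]
  apply Real.sqrt_le_sqrt
  simp only [Real.norm_eq_abs, sq_abs] at *
  fin_cases i
  · show x 0 ^ 2 ≤ _; nlinarith [sq_nonneg (x 1)]
  · show x 1 ^ 2 ≤ _; nlinarith [sq_nonneg (x 0)]

lemma myProj (T : ℝ → EuclideanSpace ℝ (Fin 2)) (d : EuclideanSpace ℝ (Fin 2))
    (s : Set ℝ) (r : ℝ) (i : Fin 2) (h : HasDerivWithinAt T d s r) :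
    HasDerivWithinAt (fun r => T r i) (d i) s r := by
  have := (EuclideanSpace.proj (𝕜 := ℝ) i).hasFDerivAt.comp_hasDerivWithinAt r h
  simp at this; exact this


/-- a spacelike curve in ℝ^{1,1} (with bilinear form
q(v,w) = v₁w₁ - v₂w₂) satisfying the Frenet equations with speed ν and curvature κ,
such that ∫₀^∞ exp(∫₀^r κν) ν dr = +∞, is proper: ‖γ(r)‖ → ∞ as r → ∞. -/
theorem spacelike_curve_proper
    (γ T N : ℝ → E2) (ν κ : ℝ → ℝ)
    (hν : ∀ r ∈ Ici (0:ℝ), 0 < ν r) (hκ : ∀ r ∈ Ici (0:ℝ), 0 < κ r)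
    (hνc : ContinuousOn ν (Ici 0)) (hκc : ContinuousOn κ (Ici 0))
    (hTT : ∀ r ∈ Ici (0:ℝ), T r 0 * T r 0 - T r 1 * T r 1 = 1)
    (hNN : ∀ r ∈ Ici (0:ℝ), N r 0 * N r 0 - N r 1 * N r 1 = -1)
    (hTN : ∀ r ∈ Ici (0:ℝ), T r 0 * N r 0 - T r 1 * N r 1 = 0)
    (hγ' : ∀ r ∈ Ici (0:ℝ), HasDerivWithinAt γ (ν r • T r) (Ici 0) r)
    (hT' : ∀ r ∈ Ici (0:ℝ), HasDerivWithinAt T ((κ r * ν r) • N r) (Ici 0) r)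
    (hN' : ∀ r ∈ Ici (0:ℝ), HasDerivWithinAt N ((κ r * ν r) • T r) (Ici 0) r)
    (hint : Filter.Tendsto
      (fun r : ℝ => ∫ s in (0:ℝ)..r,
        Real.exp (∫ t in (0:ℝ)..s, κ t * ν t) * ν s)
      Filter.atTop Filter.atTop) :
    Filter.Tendsto (fun r : ℝ => ‖γ r‖) Filter.atTop Filter.atTop := by
  classical
  -- retraction onto [0, ∞)
  set m : ℝ → ℝ := fun t => max t 0 with hm_def
  have hm_mem : ∀ t, m t ∈ Ici (0:ℝ) := fun t => Set.mem_Ici.2 (le_max_right _ _)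
  have hm_cont : Continuous m := continuous_id.max continuous_const
  have hm_id : ∀ t, 0 ≤ t → m t = t := fun t ht => max_eq_left ht
  set g : ℝ → ℝ := fun t => κ (m t) * ν (m t) with hg_def
  have hg_cont : Continuous g := by
    rw [← continuousOn_univ]
    exact ((hκc.comp hm_cont.continuousOn (fun t _ => hm_mem t)).mul
      (hνc.comp hm_cont.continuousOn (fun t _ => hm_mem t)))
  have hg_eq : ∀ t, 0 ≤ t → g t = κ t * ν t := by
    intro t ht; simp only [hg_def, hm_id t ht]
  set K : ℝ → ℝ := fun r => ∫ t in (0:ℝ)..r, g t with hK_def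
  have hK' : ∀ r, HasDerivAt K (g r) r := fun r =>
    (hg_cont.integral_hasStrictDerivAt 0 r).hasDerivAt
  have hK0 : K 0 = 0 := intervalIntegral.integral_same
  have hKc : Continuous K := continuous_iff_continuousAt.2 fun r => (hK' r).continuousAt
  -- component derivatives
  have hTi : ∀ (i : Fin 2), ∀ r ∈ Ici (0:ℝ),
      HasDerivWithinAt (fun r => T r i) ((κ r * ν r) * N r i) (Ici 0) r := by
    intro i r hr
    have := myProj T _ _ r i (hT' r hr)
    simpa using this
  have hNi : ∀ (i : Fin 2), ∀ r ∈ Ici (0:ℝ),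
      HasDerivWithinAt (fun r => N r i) ((κ r * ν r) * T r i) (Ici 0) r := by
    intro i r hr
    have := myProj N _ _ r i (hN' r hr)
    simpa using this
  have hγi : ∀ (i : Fin 2), ∀ r ∈ Ici (0:ℝ),
      HasDerivWithinAt (fun r => γ r i) (ν r * T r i) (Ici 0) r := by
    intro i r hr
    have := myProj γ _ _ r i (hγ' r hr)
    simpa using this
  -- T + N grows like exp K
  have hsum : ∀ (i : Fin 2), ∀ r, 0 ≤ r →
      T r i + N r i = Real.exp (K r) * (T 0 i + N 0 i) := by
    intro i r hr
    have hA : ∀ x ∈ Ici (0:ℝ), HasDerivWithinAt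
        (fun x => Real.exp (-(K x)) * (T x i + N x i)) 0 (Ici 0) x := by
      intro x hx
      have h1 : HasDerivWithinAt (fun x => Real.exp (-(K x)))
          (Real.exp (-(K x)) * (-(g x))) (Ici 0) x := (((hK' x).neg).exp).hasDerivWithinAt
      have h2 := (hTi i x hx).add (hNi i x hx)
      have h3 := h1.mul h2
      refine h3.congr_deriv ?_
      rw [hg_eq x hx]; simp only [Pi.add_apply]; ring
    have hc := myConstOn _ hA hr
    simp only [hK0, neg_zero, Real.exp_zero, one_mul] at hc
    calc T r i + N r i
        = Real.exp (K r) * (Real.exp (-(K r)) * (T r i + N r i)) := by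
          rw [← mul_assoc, ← Real.exp_add]; simp
      _ = Real.exp (K r) * (T 0 i + N 0 i) := by rw [hc]
  -- T - N decays like exp (-K)
  have hdiff : ∀ (i : Fin 2), ∀ r, 0 ≤ r →
      T r i - N r i = Real.exp (-(K r)) * (T 0 i - N 0 i) := by
    intro i r hr
    have hB : ∀ x ∈ Ici (0:ℝ), HasDerivWithinAt
        (fun x => Real.exp (K x) * (T x i - N x i)) 0 (Ici 0) x := by
      intro x hx
      have h1 : HasDerivWithinAt (fun x => Real.exp (K x))
          (Real.exp (K x) * g x) (Ici 0) x := ((hK' x).exp).hasDerivWithinAt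
      have h2 := (hTi i x hx).sub (hNi i x hx)
      have h3 := h1.mul h2
      refine h3.congr_deriv ?_
      rw [hg_eq x hx]; simp only [Pi.sub_apply]; ring
    have hc := myConstOn _ hB hr
    simp only [hK0, Real.exp_zero, one_mul] at hc
    calc T r i - N r i
        = Real.exp (-(K r)) * (Real.exp (K r) * (T r i - N r i)) := by
          rw [← mul_assoc, ← Real.exp_add]; simp
      _ = Real.exp (-(K r)) * (T 0 i - N 0 i) := by rw [hc]
  have h5 : (T 0 0 + N 0 0) * (T 0 0 - N 0 0) - (T 0 1 + N 0 1) * (T 0 1 - N 0 1) = 2 := by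
    linear_combination hTT 0 self_mem_Ici - hNN 0 self_mem_Ici
  have h6 : (T 0 0 - N 0 0) * (T 0 0 - N 0 0) - (T 0 1 - N 0 1) * (T 0 1 - N 0 1) = 0 := by
    linear_combination hTT 0 self_mem_Ici + hNN 0 self_mem_Ici - 2 * hTN 0 self_mem_Ici
  -- key pairing identity
  have hTkey : ∀ r, 0 ≤ r →
      T r 0 * (T 0 0 - N 0 0) - T r 1 * (T 0 1 - N 0 1) = Real.exp (K r) := by
    intro r hr
    have h1 := hsum 0 r hr
    have h2 := hsum 1 r hr
    have h3 := hdiff 0 r hr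
    have h4 := hdiff 1 r hr
    linear_combination ((T 0 0 - N 0 0)/2) * h1 + ((T 0 0 - N 0 0)/2) * h3
      - ((T 0 1 - N 0 1)/2) * h2 - ((T 0 1 - N 0 1)/2) * h4
      + (Real.exp (K r)/2) * h5 + (Real.exp (-(K r))/2) * h6
  -- the pairing function F
  set F : ℝ → ℝ := fun r => γ r 0 * (T 0 0 - N 0 0) - γ r 1 * (T 0 1 - N 0 1) with hF_def
  have hF' : ∀ r ∈ Ici (0:ℝ),
      HasDerivWithinAt F (ν (m r) * Real.exp (K r)) (Ici 0) r := by
    intro r hr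
    have h1 := (hγi 0 r hr).mul_const (T 0 0 - N 0 0)
    have h2 := (hγi 1 r hr).mul_const (T 0 1 - N 0 1)
    have h3 := h1.sub h2
    refine h3.congr_deriv ?_
    rw [hm_id r hr]
    linear_combination (ν r) * hTkey r hr
  set h : ℝ → ℝ := fun r => ν (m r) * Real.exp (K r) with hh_def
  have hh_cont : Continuous h := by
    apply Continuous.mul
    · rw [← continuousOn_univ]
      exact hνc.comp hm_cont.continuousOn (fun t _ => hm_mem t)
    · exact Real.continuous_exp.comp hKc
  set I : ℝ → ℝ := fun r => ∫ s in (0:ℝ)..r, h s with hI_def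
  have hI' : ∀ r, HasDerivAt I (h r) r := fun r =>
    (hh_cont.integral_hasStrictDerivAt 0 r).hasDerivAt
  have hFI : ∀ r, 0 ≤ r → F r = F 0 + I r := by
    intro r hr
    have hD : ∀ x ∈ Ici (0:ℝ), HasDerivWithinAt (fun x => F x - I x) 0 (Ici 0) x := by
      intro x hx
      have := (hF' x hx).sub ((hI' x).hasDerivWithinAt)
      exact this.congr_deriv (sub_self _)
    have hc := myConstOn _ hD hr
    have hI0 : I 0 = 0 := intervalIntegral.integral_same
    rw [hI0] at hc
    linarith [hc]
  -- identify I with the integral in the hypothesis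
  have hIeq : ∀ r, 0 ≤ r →
      (∫ s in (0:ℝ)..r, Real.exp (∫ t in (0:ℝ)..s, κ t * ν t) * ν s) = I r := by
    intro r hr
    apply intervalIntegral.integral_congr
    intro s hs
    rw [uIcc_of_le hr] at hs
    have hs0 : 0 ≤ s := hs.1
    have hKs : (∫ t in (0:ℝ)..s, κ t * ν t) = K s := by
      apply intervalIntegral.integral_congr
      intro t ht
      rw [uIcc_of_le hs0] at ht
      exact (hg_eq t ht.1).symm
    simp only [hh_def]
    rw [hKs, hm_id s hs0]; ring
  have hI_top : Filter.Tendsto I Filter.atTop Filter.atTop := by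
    apply hint.congr'
    filter_upwards [Filter.eventually_ge_atTop (0:ℝ)] with r hr
    exact hIeq r hr
  have hF_top : Filter.Tendsto F Filter.atTop Filter.atTop := by
    have h0 : Filter.Tendsto (fun r => F 0 + I r) Filter.atTop Filter.atTop :=
      Filter.tendsto_atTop_add_const_left _ _ hI_top
    apply h0.congr'
    filter_upwards [Filter.eventually_ge_atTop (0:ℝ)] with r hr
    exact (hFI r hr).symm
  -- the coefficient vector is nonzero
  set a : ℝ := T 0 0 - N 0 0 with ha_def
  set b : ℝ := T 0 1 - N 0 1 with hb_def
  have hC : 0 < |a| + |b| := by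
    by_contra hc
    push_neg at hc
    have ha0 : a = 0 := abs_eq_zero.mp (le_antisymm (by linarith [abs_nonneg a, abs_nonneg b]) (abs_nonneg a))
    have hb0 : b = 0 := abs_eq_zero.mp (le_antisymm (by linarith [abs_nonneg a, abs_nonneg b]) (abs_nonneg b))
    rw [ha0, hb0] at h5
    norm_num at h5
  -- bound F by the norm
  have hbound : ∀ r, F r ≤ ‖γ r‖ * (|a| + |b|) := by
    intro r
    have h0 := myCoordBound (γ r) 0
    have h1 := myCoordBound (γ r) 1
    have e1 : γ r 0 * a ≤ |γ r 0| * |a| := by rw [← abs_mul]; exact le_abs_self _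
    have e2 : -(γ r 1 * b) ≤ |γ r 1| * |b| := by rw [← abs_mul]; exact neg_le_abs _
    have e3 : |γ r 0| * |a| ≤ ‖γ r‖ * |a| := mul_le_mul_of_nonneg_right h0 (abs_nonneg _)
    have e4 : |γ r 1| * |b| ≤ ‖γ r‖ * |b| := mul_le_mul_of_nonneg_right h1 (abs_nonneg _)
    have : F r = γ r 0 * a - γ r 1 * b := rfl
    nlinarith
  -- conclude
  have hdiv : Filter.Tendsto (fun r => F r / (|a| + |b|)) Filter.atTop Filter.atTop :=
    hF_top.atTop_div_const hC
  apply Filter.tendsto_atTop_mono (fun r => ?_) hdiv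
  rw [div_le_iff₀ hC]
  exact hbound r


end
end

section
/- Let r₁ > 0 and let h be a real-valued function that is C² on the open set {w ∈ ℝ² : |w| > r₁}, satisfying there the sinh-Gordon equation Δh(w) = 2·sinh(2·h(w)) (where Δ = ∂²/∂w₁² + ∂²/∂w₂² is the Euclidean Laplacian), with h(w) > 0 for all |w| > r₁ and h(w) → 0 as |w| → ∞. Then there exist constants A > 0 and r₀ ≥ r₁ such that h(w) ≥ (A/√|w|)·e^{−2|w|} for every w with |w| ≥ r₀. -/
open Set MeasureTheory
open scoped Topology ENNReal

noncomputable section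

/-- The Euclidean Laplacian Δh = ∂²h/∂w₁² + ∂²h/∂w₂² of a function on ℝ². -/
def laplacian2 (h : E2 → ℝ) (w : E2) : ℝ :=
  fderiv ℝ (fun v => fderiv ℝ h v (EuclideanSpace.single 0 1)) w (EuclideanSpace.single 0 1)
  + fderiv ℝ (fun v => fderiv ℝ h v (EuclideanSpace.single 1 1)) w (EuclideanSpace.single 1 1)

section SinhGordonAux

def phi (A s : ℝ) : ℝ := A * Real.exp (-2 * Real.sqrt s) / Real.sqrt (Real.sqrt s)
def phiD (A s : ℝ) : ℝ :=
  -(A * Real.exp (-2 * Real.sqrt s) * (4 * Real.sqrt s + 1)) /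
    (4 * Real.sqrt s ^ 2 * Real.sqrt (Real.sqrt s))
def phiDD (A s : ℝ) : ℝ :=
  A * Real.exp (-2 * Real.sqrt s) * (16 * Real.sqrt s ^ 2 + 16 * Real.sqrt s + 5) /
    (16 * Real.sqrt s ^ 4 * Real.sqrt (Real.sqrt s))

lemma hasDerivAt_phi (A : ℝ) {s : ℝ} (hs : 0 < s) : HasDerivAt (phi A) (phiD A s) s := by
  have hq : 0 < Real.sqrt s := Real.sqrt_pos.2 hs
  have hp : 0 < Real.sqrt (Real.sqrt s) := Real.sqrt_pos.2 hq
  have h1 : HasDerivAt Real.sqrt (1 / (2 * Real.sqrt s)) s := Real.hasDerivAt_sqrt hs.ne'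
  have h2 : HasDerivAt (fun s => Real.exp (-2 * Real.sqrt s))
      (Real.exp (-2 * Real.sqrt s) * (-2 * (1 / (2 * Real.sqrt s)))) s :=
    (h1.const_mul (-2)).exp
  have h3 : HasDerivAt (fun s => Real.sqrt (Real.sqrt s))
      (1 / (2 * Real.sqrt (Real.sqrt s)) * (1 / (2 * Real.sqrt s))) s :=
    (Real.hasDerivAt_sqrt hq.ne').comp s h1
  have h4 := (h2.const_mul A).div h3 hp.ne'
  refine h4.congr_deriv ?_
  symm
  have hq2 : Real.sqrt s ^ 2 = s := Real.sq_sqrt hs.le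
  have hp2 : Real.sqrt (Real.sqrt s) ^ 2 = Real.sqrt s := Real.sq_sqrt hq.le
  rw [phiD]
  generalize hpv : Real.sqrt (Real.sqrt s) = p at *
  generalize hqv : Real.sqrt s = q at *
  field_simp
  rw [← hp2]
  ring

lemma hasDerivAt_phiD (A : ℝ) {s : ℝ} (hs : 0 < s) : HasDerivAt (phiD A) (phiDD A s) s := by
  have hq : 0 < Real.sqrt s := Real.sqrt_pos.2 hs
  have hp : 0 < Real.sqrt (Real.sqrt s) := Real.sqrt_pos.2 hq
  have h1 : HasDerivAt Real.sqrt (1 / (2 * Real.sqrt s)) s := Real.hasDerivAt_sqrt hs.ne'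
  have h2 : HasDerivAt (fun s => Real.exp (-2 * Real.sqrt s))
      (Real.exp (-2 * Real.sqrt s) * (-2 * (1 / (2 * Real.sqrt s)))) s :=
    (h1.const_mul (-2)).exp
  have h3 : HasDerivAt (fun s => Real.sqrt (Real.sqrt s))
      (1 / (2 * Real.sqrt (Real.sqrt s)) * (1 / (2 * Real.sqrt s))) s :=
    (Real.hasDerivAt_sqrt hq.ne').comp s h1
  have hnum : HasDerivAt (fun s => -(A * Real.exp (-2 * Real.sqrt s) * (4 * Real.sqrt s + 1)))
      (-((A * (Real.exp (-2 * Real.sqrt s) * (-2 * (1 / (2 * Real.sqrt s))))) * (4 * Real.sqrt s + 1)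
        + (A * Real.exp (-2 * Real.sqrt s)) * (4 * (1 / (2 * Real.sqrt s))))) s := by
    exact (((h2.const_mul A).mul ((h1.const_mul 4).add_const 1))).neg
  have hden : HasDerivAt (fun s => 4 * Real.sqrt s ^ 2 * Real.sqrt (Real.sqrt s))
      ((4 * (2 * Real.sqrt s ^ 1 * (1 / (2 * Real.sqrt s)))) * Real.sqrt (Real.sqrt s)
        + (4 * Real.sqrt s ^ 2) * (1 / (2 * Real.sqrt (Real.sqrt s)) * (1 / (2 * Real.sqrt s)))) s := by
    exact (((h1.pow 2).const_mul 4)).mul h3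
  have hdne : 4 * Real.sqrt s ^ 2 * Real.sqrt (Real.sqrt s) ≠ 0 := by positivity
  have h4 := hnum.div hden hdne
  refine h4.congr_deriv ?_
  symm
  have hq2 : Real.sqrt s ^ 2 = s := Real.sq_sqrt hs.le
  have hp2 : Real.sqrt (Real.sqrt s) ^ 2 = Real.sqrt s := Real.sq_sqrt hq.le
  rw [phiDD]
  generalize hpv : Real.sqrt (Real.sqrt s) = p at *
  generalize hqv : Real.sqrt s = q at *
  field_simp
  rw [← hp2]
  ring

lemma phi_key (A : ℝ) {s : ℝ} (hs : 0 < s) :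
    4 * s * phiDD A s + 4 * phiD A s = phi A s * (4 + 1 / (4 * s)) := by
  have hq : 0 < Real.sqrt s := Real.sqrt_pos.2 hs
  have hp : 0 < Real.sqrt (Real.sqrt s) := Real.sqrt_pos.2 hq
  have hq2 : Real.sqrt s ^ 2 = s := Real.sq_sqrt hs.le
  have hp2 : Real.sqrt (Real.sqrt s) ^ 2 = Real.sqrt s := Real.sq_sqrt hq.le
  rw [phi, phiD, phiDD]
  generalize hpv : Real.sqrt (Real.sqrt s) = p at *
  generalize hqv : Real.sqrt s = q at *
  rw [← hq2]
  field_simp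
  rw [← hp2]
  ring


lemma secondDerivTest {g g1 : ℝ → ℝ} {ε c : ℝ} (hε : 0 < ε)
    (hg : ∀ t ∈ Set.Ioo (-ε) ε, HasDerivAt g (g1 t) t)
    (hg1 : HasDerivAt g1 c 0)
    (hmax : ∀ t ∈ Set.Ioo (-ε) ε, g t ≤ g 0) : c ≤ 0 := by
  by_contra hc
  push_neg at hc
  have hmem : (0:ℝ) ∈ Set.Ioo (-ε) ε := ⟨by linarith, hε⟩
  have h0 : g1 0 = 0 := by
    have hloc : IsLocalMax g 0 :=
      Filter.eventually_of_mem (Ioo_mem_nhds (by linarith) hε) hmax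
    exact hloc.hasDerivAt_eq_zero (hg 0 hmem)
  have hslope : Filter.Tendsto (slope g1 0) (𝓝[>] 0) (𝓝 c) :=
    (hasDerivAt_iff_tendsto_slope.mp hg1).mono_left
      (nhdsWithin_mono 0 fun x hx => ne_of_gt hx)
  have hpos : ∀ᶠ t in 𝓝[>] (0:ℝ), 0 < g1 t := by
    filter_upwards [hslope.eventually (eventually_gt_nhds hc), self_mem_nhdsWithin]
      with t h1 h2
    have h2' : (0:ℝ) < t := h2
    have : slope g1 0 t = g1 t / t := by simp [slope_def_field, h0]
    rw [this] at h1
    rcases div_pos_iff.mp h1 with ⟨h, _⟩ | ⟨_, h⟩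
    · exact h
    · linarith
  obtain ⟨δ, hδpos, hδ⟩ : ∃ δ > 0, ∀ t : ℝ, 0 < t → t < δ → 0 < g1 t := by
    rw [eventually_nhdsWithin_iff, Metric.eventually_nhds_iff] at hpos
    obtain ⟨δ, hδ, H⟩ := hpos
    exact ⟨δ, hδ, fun t ht htδ =>
      H (by simpa [Real.dist_eq, abs_of_pos ht] using htδ) ht⟩
  set t₀ : ℝ := min (δ / 2) (ε / 2) with ht₀def
  have ht₀pos : 0 < t₀ := lt_min (by linarith) (by linarith)
  have ht₀ε : t₀ < ε := lt_of_le_of_lt (min_le_right _ _) (by linarith)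
  have hsub : Set.Icc (0:ℝ) t₀ ⊆ Set.Ioo (-ε) ε := fun x hx =>
    ⟨by linarith [hx.1], lt_of_le_of_lt hx.2 ht₀ε⟩
  have sm : StrictMonoOn g (Set.Icc 0 t₀) := by
    apply strictMonoOn_of_deriv_pos (convex_Icc 0 t₀)
    · intro x hx
      exact (hg x (hsub hx)).continuousAt.continuousWithinAt
    · intro x hx
      rw [interior_Icc] at hx
      rw [(hg x (hsub ⟨hx.1.le, hx.2.le⟩)).deriv]
      exact hδ x hx.1 (by linarith [hx.2, min_le_left (δ / 2) (ε / 2)])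
  have : g 0 < g t₀ :=
    sm ⟨le_refl 0, ht₀pos.le⟩ ⟨ht₀pos.le, le_refl t₀⟩ ht₀pos
  exact absurd (hmax t₀ ⟨by linarith, ht₀ε⟩) (not_le.2 this)

lemma sinh_le_cubic {x : ℝ} (h0 : 0 ≤ x) (h1 : x ≤ 1) :
    Real.sinh x ≤ x + (2 / 9) * x ^ 3 := by
  have habs : |x| ≤ 1 := by rwa [abs_of_nonneg h0]
  have habs' : |(-x)| ≤ 1 := by rwa [abs_neg]
  have hb1 := Real.exp_bound habs (n := 3) (by norm_num)
  have hb2 := Real.exp_bound habs' (n := 3) (by norm_num)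
  have hsum : ∑ m ∈ Finset.range 3, x ^ m / m.factorial = 1 + x + x ^ 2 / 2 := by
    norm_num [Finset.sum_range_succ, Nat.factorial]
  have hsum' : ∑ m ∈ Finset.range 3, (-x) ^ m / m.factorial = 1 - x + x ^ 2 / 2 := by
    norm_num [Finset.sum_range_succ, Nat.factorial]
    ring
  rw [hsum] at hb1
  rw [hsum', abs_neg] at hb2
  norm_num [Nat.factorial] at hb1 hb2
  have e1 := (abs_sub_le_iff.mp hb1).1
  have e2 := (abs_sub_le_iff.mp hb2).2
  rw [Real.sinh_eq]
  rw [abs_of_nonneg h0] at e1 e2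
  linarith

lemma four_mul_le_exp {r : ℝ} (hr : 0 ≤ r) : 4 * r ≤ Real.exp (2 * r) := by
  have h := Real.add_one_le_exp r
  have h2 : Real.exp (2 * r) = Real.exp r * Real.exp r := by
    rw [← Real.exp_add]; ring_nf
  have h3 : (r + 1) * (r + 1) ≤ Real.exp r * Real.exp r :=
    mul_le_mul h h (by linarith) (Real.exp_pos r).le
  nlinarith [sq_nonneg (r - 1)]

end SinhGordonAux

set_option maxHeartbeats 2000000 in
/-- a positive solution of the sinh-Gordon equation Δh = 2 sinh(2h)
outside a disk which tends to 0 at infinity obeys the lower bound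
h(w) ≥ (A/√|w|) e^{-2|w|} for large |w|. -/
theorem sinhGordon_lower_bound
    (r₁ : ℝ) (hr₁ : 0 < r₁) (h : E2 → ℝ)
    (hreg : ContDiffOn ℝ 2 h {w : E2 | r₁ < ‖w‖})
    (heq : ∀ w : E2, r₁ < ‖w‖ → laplacian2 h w = 2 * Real.sinh (2 * h w))
    (hpos : ∀ w : E2, r₁ < ‖w‖ → 0 < h w)
    (hlim : Filter.Tendsto h (Filter.comap norm Filter.atTop) (nhds 0)) :
    ∃ A > 0, ∃ r₀ ≥ r₁, ∀ w : E2, r₀ ≤ ‖w‖ →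
      (A / Real.sqrt ‖w‖) * Real.exp (-2 * ‖w‖) ≤ h w := by
  have hUopen : IsOpen {w : E2 | r₁ < ‖w‖} := isOpen_lt continuous_const continuous_norm
  set U : Set E2 := {w : E2 | r₁ < ‖w‖} with hUdef
  set r₀ : ℝ := r₁ + 1 with hr₀def
  have hr₀1 : 1 < r₀ := by linarith
  have hr₀r₁ : r₁ < r₀ := by linarith
  -- minimum of h on the sphere of radius r₀
  have hsph_ne : (Metric.sphere (0:E2) r₀).Nonempty :=
    NormedSpace.sphere_nonempty.2 (by linarith)
  have hsph_sub : Metric.sphere (0:E2) r₀ ⊆ U := by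
    intro v hv
    rw [mem_sphere_zero_iff_norm] at hv
    show r₁ < ‖v‖
    rw [hv]; linarith
  obtain ⟨w₀, hw₀S, hw₀min⟩ := (isCompact_sphere (0:E2) r₀).exists_isMinOn hsph_ne
    (hreg.continuousOn.mono hsph_sub)
  set m₀ : ℝ := h w₀ with hm₀def
  have hm₀pos : 0 < m₀ := hpos w₀ (hsph_sub hw₀S)
  set A : ℝ := min 1 (m₀ * Real.sqrt r₀ * Real.exp (2 * r₀)) with hAdef
  have hsqr₀pos : 0 < Real.sqrt r₀ := Real.sqrt_pos.2 (by linarith)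
  have hApos : 0 < A := lt_min one_pos (by positivity)
  have hA1 : A ≤ 1 := min_le_left _ _
  refine ⟨A, hApos, r₀, by linarith, ?_⟩
  set V : E2 → ℝ := fun v => A / Real.sqrt ‖v‖ * Real.exp (-2 * ‖v‖) with hVdef
  -- basic facts about V
  have hVphi : ∀ v : E2, phi A (‖v‖ ^ 2) = V v := by
    intro v
    rw [phi, Real.sqrt_sq (norm_nonneg v), hVdef]
    ring
  have hVpos : ∀ v : E2, 0 < ‖v‖ → 0 < V v := by
    intro v hv
    have : 0 < Real.sqrt ‖v‖ := Real.sqrt_pos.2 hv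
    positivity
  have hVexp : ∀ v : E2, 1 ≤ ‖v‖ → V v ≤ Real.exp (-2 * ‖v‖) := by
    intro v hv
    have h1 : 1 ≤ Real.sqrt ‖v‖ := by
      rw [show (1:ℝ) = Real.sqrt 1 from (Real.sqrt_one).symm]
      exact Real.sqrt_le_sqrt hv
    have h2 : A / Real.sqrt ‖v‖ ≤ 1 := by
      rw [div_le_one (by linarith)]; linarith
    calc V v = A / Real.sqrt ‖v‖ * Real.exp (-2 * ‖v‖) := rfl
      _ ≤ 1 * Real.exp (-2 * ‖v‖) := by
          apply mul_le_mul_of_nonneg_right h2 (Real.exp_pos _).le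
      _ = Real.exp (-2 * ‖v‖) := one_mul _
  have hexp_le : ∀ r : ℝ, 1 ≤ r → Real.exp (-2 * r) ≤ 1 / (4 * r) := by
    intro r hr
    have h4 := four_mul_le_exp (by linarith : (0:ℝ) ≤ r)
    rw [show (-2 : ℝ) * r = -(2 * r) by ring, Real.exp_neg]
    rw [one_div]
    exact inv_anti₀ (by linarith) h4
  intro w hw
  by_contra hcon
  push_neg at hcon
  have hconV : h w < V w := hcon
  set m : ℝ := V w - h w with hmdef
  have hm : 0 < m := by linarith
  set R : ℝ := max (‖w‖ + 1) (Real.log (1 / m) / 2 + 1) with hRdef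
  have hR1 : ‖w‖ + 1 ≤ R := le_max_left _ _
  have hR2 : Real.log (1 / m) / 2 + 1 ≤ R := le_max_right _ _
  have hRge1 : 1 ≤ R := by
    have : 1 ≤ ‖w‖ + 1 := by linarith [le_trans hr₀1.le hw]
    linarith
  have hexpRm : Real.exp (-2 * R) < m := by
    have h1 : -2 * R ≤ -Real.log (1 / m) - 2 := by linarith
    have h2 : Real.exp (-Real.log (1 / m) - 2) = m * Real.exp (-2) := by
      rw [Real.exp_sub, Real.exp_neg, Real.exp_log (by positivity : (0:ℝ) < 1 / m)]
      rw [Real.exp_neg]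
      field_simp
    calc Real.exp (-2 * R) ≤ Real.exp (-Real.log (1 / m) - 2) := Real.exp_le_exp.2 h1
      _ = m * Real.exp (-2) := h2
      _ < m * 1 := by
          apply mul_lt_mul_of_pos_left _ hm
          rw [show (1:ℝ) = Real.exp 0 from Real.exp_zero.symm]
          exact Real.exp_lt_exp.2 (by norm_num)
      _ = m := mul_one m
  have hVsmall : ∀ v : E2, R ≤ ‖v‖ → V v < m := by
    intro v hv
    have h1 : 1 ≤ ‖v‖ := le_trans hRge1 hv
    calc V v ≤ Real.exp (-2 * ‖v‖) := hVexp v h1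
      _ ≤ Real.exp (-2 * R) := Real.exp_le_exp.2 (by linarith)
      _ < m := hexpRm
  -- compact region and maximum point
  set K : Set E2 := Metric.closedBall (0:E2) R ∩ {v : E2 | r₀ ≤ ‖v‖} with hKdef
  have hKcomp : IsCompact K :=
    (isCompact_closedBall (0:E2) R).inter_right (isClosed_le continuous_const continuous_norm)
  have hKsubU : K ⊆ U := by
    intro v hv
    have : r₀ ≤ ‖v‖ := hv.2
    show r₁ < ‖v‖
    linarith
  have hVcont : ContinuousOn V K := by
    have c1 : Continuous fun v : E2 => Real.exp (-2 * ‖v‖) :=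
      Real.continuous_exp.comp (continuous_const.mul continuous_norm)
    have c2 : Continuous fun v : E2 => Real.sqrt ‖v‖ :=
      Real.continuous_sqrt.comp continuous_norm
    apply ContinuousOn.mul _ c1.continuousOn
    apply ContinuousOn.div continuousOn_const c2.continuousOn
    intro v hv
    have : r₀ ≤ ‖v‖ := hv.2
    exact (Real.sqrt_pos.2 (by linarith)).ne'
  have hu_cont : ContinuousOn (fun v => V v - h v) K :=
    hVcont.sub (hreg.continuousOn.mono hKsubU)
  have hwK : w ∈ K := ⟨mem_closedBall_zero_iff.2 (by linarith), hw⟩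
  obtain ⟨z, hzK, hzmax⟩ := hKcomp.exists_isMaxOn ⟨w, hwK⟩ hu_cont
  have hzmax' : ∀ v ∈ K, V v - h v ≤ V z - h z := fun v hv => hzmax hv
  have huz : m ≤ V z - h z := by
    have := hzmax' w hwK
    rw [hmdef]
    linarith
  have hznorm : r₀ ≤ ‖z‖ := hzK.2
  have hzRle : ‖z‖ ≤ R := mem_closedBall_zero_iff.1 hzK.1
  have hz_r₁ : r₁ < ‖z‖ := by linarith
  have hz1 : 1 ≤ ‖z‖ := by linarith
  have hhz_pos : 0 < h z := hpos z hz_r₁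
  have hVzgt : h z < V z := by linarith
  have hzR : ‖z‖ < R := by
    rcases lt_or_eq_of_le hzRle with h' | h'
    · exact h'
    · exfalso
      have := hVsmall z h'.ge
      linarith
  have hzr₀ : r₀ < ‖z‖ := by
    rcases lt_or_eq_of_le hznorm with h' | h'
    · exact h'
    · exfalso
      have hzS : z ∈ Metric.sphere (0:E2) r₀ := mem_sphere_zero_iff_norm.2 h'.symm
      have hminz : m₀ ≤ h z := hw₀min hzS
      have hVle : V z ≤ m₀ := by
        have hAle : A ≤ m₀ * Real.sqrt r₀ * Real.exp (2 * r₀) := min_le_right _ _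
        have : V z = A / Real.sqrt r₀ * Real.exp (-2 * r₀) := by
          show A / Real.sqrt ‖z‖ * Real.exp (-2 * ‖z‖) = _
          rw [← h']
        rw [this]
        calc A / Real.sqrt r₀ * Real.exp (-2 * r₀)
            ≤ m₀ * Real.sqrt r₀ * Real.exp (2 * r₀) / Real.sqrt r₀ * Real.exp (-2 * r₀) := by
              apply mul_le_mul_of_nonneg_right _ (Real.exp_pos _).le
              gcongr
          _ = m₀ * (Real.exp (2 * r₀) * Real.exp (-2 * r₀)) := by
              field_simp
          _ = m₀ := by
              rw [← Real.exp_add]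
              norm_num
      linarith
  -- open neighborhood of z inside K
  set O : Set E2 := {v : E2 | r₀ < ‖v‖} ∩ Metric.ball (0:E2) R with hOdef
  have hOopen : IsOpen O :=
    (isOpen_lt continuous_const continuous_norm).inter Metric.isOpen_ball
  have hzO : z ∈ O := ⟨hzr₀, mem_ball_zero_iff.2 hzR⟩
  have hOsubK : O ⊆ K := by
    intro v hv
    refine ⟨mem_closedBall_zero_iff.2 (le_of_lt (mem_ball_zero_iff.1 hv.2)), ?_⟩
    show r₀ ≤ ‖v‖
    exact le_of_lt hv.1
  obtain ⟨ε, hεpos, hεsub⟩ := Metric.isOpen_iff.1 hOopen z hzO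
  set s : ℝ := ‖z‖ ^ 2 with hsdef
  have hspos : 0 < s := by positivity
  -- the key directional inequality
  have cih : ∀ i : Fin 2,
      phiDD A s * (2 * z i) * (2 * z i) + phiD A s * 2
        ≤ fderiv ℝ (fun v => fderiv ℝ h v (EuclideanSpace.single i 1)) z
            (EuclideanSpace.single i 1) := by
    intro i
    set e : E2 := EuclideanSpace.single i (1:ℝ) with hedef
    have he : ‖e‖ = 1 := by simp [hedef, EuclideanSpace.norm_single]
    have hb : (inner ℝ z e : ℝ) = z i := by simp [hedef, EuclideanSpace.inner_single_right]
    set q : ℝ → ℝ := fun t => s + 2 * z i * t + t ^ 2 with hqdef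
    have hq_eq : ∀ t : ℝ, q t = ‖z + t • e‖ ^ 2 := by
      intro t
      rw [hqdef]
      show s + 2 * z i * t + t ^ 2 = _
      rw [norm_add_sq_real, real_inner_smul_right, hb, norm_smul]
      simp [he, mul_pow, sq_abs]
      ring
    have hmem : ∀ t ∈ Set.Ioo (-ε) ε, z + t • e ∈ O := by
      intro t ht
      apply hεsub
      rw [Metric.mem_ball, dist_eq_norm]
      have : z + t • e - z = t • e := by abel
      rw [this, norm_smul, he, mul_one]
      exact abs_lt.2 ⟨ht.1, ht.2⟩
    have hmemU : ∀ t ∈ Set.Ioo (-ε) ε, z + t • e ∈ U := by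
      intro t ht
      have h2 : r₀ < ‖z + t • e‖ := (hmem t ht).1
      show r₁ < ‖z + t • e‖
      linarith
    have hqpos : ∀ t ∈ Set.Ioo (-ε) ε, 0 < q t := by
      intro t ht
      rw [hq_eq]
      have h1 : r₀ < ‖z + t • e‖ := (hmem t ht).1
      nlinarith
    have h0mem : (0:ℝ) ∈ Set.Ioo (-ε) ε := ⟨by linarith, hεpos⟩
    have hz0 : z + (0:ℝ) • e = z := by simp
    have hline : ∀ t : ℝ, HasDerivAt (fun t : ℝ => z + t • e) e t := fun t => by
      simpa using ((hasDerivAt_id t).smul_const e).const_add z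
    have hq' : ∀ t : ℝ, HasDerivAt q (2 * z i + 2 * t) t := by
      intro t
      have h1 : HasDerivAt (fun t : ℝ => s + 2 * z i * t + t ^ 2)
          (0 + 2 * z i * 1 + ↑2 * t ^ 1) t :=
        ((hasDerivAt_const t s).add ((hasDerivAt_id t).const_mul (2 * z i))).add
          (hasDerivAt_pow 2 t)
      convert h1 using 1
      push_cast
      ring
    have hq0 : q 0 = s := by rw [hqdef]; show s + 2 * z i * 0 + 0 ^ 2 = s; ring
    -- derivative of t ↦ V (z + t e)
    have hVcomp : ∀ t ∈ Set.Ioo (-ε) ε,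
        HasDerivAt (fun t => V (z + t • e)) (phiD A (q t) * (2 * z i + 2 * t)) t := by
      intro t ht
      have hphi := (hasDerivAt_phi A (hqpos t ht)).comp t (hq' t)
      have hfeq : (fun t => phi A (q t)) = fun t => V (z + t • e) := by
        funext t
        rw [hq_eq t, hVphi]
      rw [← hfeq]
      exact hphi
    -- second derivative of the V part at 0
    have hVder2 : HasDerivAt (fun t => phiD A (q t) * (2 * z i + 2 * t))
        (phiDD A s * (2 * z i) * (2 * z i) + phiD A s * 2) 0 := by
      have h1 : HasDerivAt (fun t => phiD A (q t)) (phiDD A (q 0) * (2 * z i + 2 * 0)) 0 :=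
        (hasDerivAt_phiD A (hqpos 0 h0mem)).comp 0 (hq' 0)
      have h2 : HasDerivAt (fun t : ℝ => 2 * z i + 2 * t) 2 0 := by
        simpa using ((hasDerivAt_id (0:ℝ)).const_mul 2).const_add (2 * z i)
      have h3 := h1.mul h2
      refine h3.congr_deriv ?_
      symm
      rw [hq0]
      ring
    -- derivative of t ↦ h (z + t e)
    have hhder : ∀ t ∈ Set.Ioo (-ε) ε,
        HasDerivAt (fun t => h (z + t • e)) (fderiv ℝ h (z + t • e) e) t := by
      intro t ht
      have hdiff : DifferentiableAt ℝ h (z + t • e) :=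
        ((hreg.differentiableOn (by norm_num)) _ (hmemU t ht)).differentiableAt
          (hUopen.mem_nhds (hmemU t ht))
      exact hdiff.hasFDerivAt.comp_hasDerivAt t (hline t)
    -- second derivative of the h part at 0
    have hzU : z ∈ U := hKsubU hzK
    have hWdiff : DifferentiableAt ℝ (fun v => fderiv ℝ h v e) z := by
      have hF : ContDiffOn ℝ 1 (fderiv ℝ h) U := hreg.fderiv_of_isOpen hUopen (by norm_num)
      have : DifferentiableAt ℝ (fderiv ℝ h) z :=
        ((hF.differentiableOn (by norm_num)) z hzU).differentiableAt (hUopen.mem_nhds hzU)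
      exact this.clm_apply (differentiableAt_const e)
    have hWder : HasDerivAt (fun t : ℝ => fderiv ℝ h (z + t • e) e)
        (fderiv ℝ (fun v => fderiv ℝ h v e) z e) (0:ℝ) := by
      have hW' : HasFDerivAt (fun v => fderiv ℝ h v e)
          (fderiv ℝ (fun v => fderiv ℝ h v e) z) (z + (0:ℝ) • e) :=
        hz0.symm ▸ hWdiff.hasFDerivAt
      exact hW'.comp_hasDerivAt 0 (hline 0)
    -- max condition
    have hmax : ∀ t ∈ Set.Ioo (-ε) ε,
        V (z + t • e) - h (z + t • e) ≤ V (z + (0:ℝ) • e) - h (z + (0:ℝ) • e) := by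
      intro t ht
      rw [hz0]
      exact hzmax' _ (hOsubK (hmem t ht))
    have key := secondDerivTest hεpos
      (g := fun t => V (z + t • e) - h (z + t • e))
      (g1 := fun t => phiD A (q t) * (2 * z i + 2 * t) - fderiv ℝ h (z + t • e) e)
      (fun t ht => ((hVcomp t ht).sub (hhder t ht)))
      (hVder2.sub hWder)
      hmax
    linarith [key]
  -- sum the two directions
  have hlap := heq z hz_r₁
  have hsum : (phiDD A s * (2 * z 0) * (2 * z 0) + phiD A s * 2)
      + (phiDD A s * (2 * z 1) * (2 * z 1) + phiD A s * 2) ≤ 2 * Real.sinh (2 * h z) := by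
    rw [← hlap]
    exact add_le_add (cih 0) (cih 1)
  have hzsq : z 0 ^ 2 + z 1 ^ 2 = s := by
    rw [hsdef, EuclideanSpace.norm_eq, Real.sq_sqrt (by positivity)]
    simp [Fin.sum_univ_two, sq_abs]
  have hL : 4 * s * phiDD A s + 4 * phiD A s ≤ 2 * Real.sinh (2 * h z) := by
    have e : 4 * s * phiDD A s + 4 * phiD A s
        = (phiDD A s * (2 * z 0) * (2 * z 0) + phiD A s * 2)
          + (phiDD A s * (2 * z 1) * (2 * z 1) + phiD A s * 2) := by
      linear_combination (-(4 * phiDD A s)) * hzsq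
    rw [e]
    exact hsum
  have hVzphi : phi A s = V z := by rw [hsdef]; exact hVphi z
  have hmain : V z * (4 + 1 / (4 * s)) ≤ 2 * Real.sinh (2 * h z) := by
    rw [← hVzphi, ← phi_key A hspos]
    exact hL
  have hVz_le : V z ≤ 1 / (4 * ‖z‖) := le_trans (hVexp z hz1) (hexp_le _ hz1)
  have hVz_pos : 0 < V z := hVpos z (by linarith)
  have h2Vz_le1 : 2 * V z ≤ 1 := by
    have h1 : 1 / (4 * ‖z‖) ≤ 1 / 4 := by
      apply one_div_le_one_div_of_le (by norm_num)
      linarith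
    linarith
  have hsinh := sinh_le_cubic (x := 2 * V z) (by linarith) h2Vz_le1
  have hstrict : Real.sinh (2 * h z) < Real.sinh (2 * V z) :=
    Real.sinh_lt_sinh.2 (by linarith)
  have hVzsq : V z ^ 2 * s ≤ 1 / 16 := by
    have h1 : V z ^ 2 ≤ (1 / (4 * ‖z‖)) ^ 2 := pow_le_pow_left₀ hVz_pos.le hVz_le 2
    have h2 : (1 / (4 * ‖z‖)) ^ 2 * s = 1 / 16 := by
      rw [hsdef]
      have hzne : ‖z‖ ≠ 0 := (by linarith : (0:ℝ) < ‖z‖).ne'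
      field_simp
      ring
    calc V z ^ 2 * s ≤ (1 / (4 * ‖z‖)) ^ 2 * s := mul_le_mul_of_nonneg_right h1 hspos.le
      _ = 1 / 16 := h2
  have step1 : V z * (4 + 1 / (4 * s)) < 4 * V z + (32 / 9) * V z ^ 3 := by
    have e4 : (2 / 9 : ℝ) * (2 * V z) ^ 3 = (16 / 9) * V z ^ 3 := by ring
    linarith [hsinh]
  have step2 : V z * (1 / (4 * s)) < (32 / 9) * V z ^ 3 := by
    have e : V z * (4 + 1 / (4 * s)) = 4 * V z + V z * (1 / (4 * s)) := by ring
    linarith [e ▸ step1]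
  have hmul := mul_lt_mul_of_pos_right step2 hspos
  have eL : V z * (1 / (4 * s)) * s = V z / 4 := by
    field_simp
  have eR : (32 / 9) * V z ^ 3 * s ≤ (2 / 9) * V z := by
    have e5 : (32 / 9) * V z ^ 3 * s = (32 / 9) * (V z * (V z ^ 2 * s)) := by ring
    have e6 : V z * (V z ^ 2 * s) ≤ V z * (1 / 16) :=
      mul_le_mul_of_nonneg_left hVzsq hVz_pos.le
    rw [e5]
    linarith
  rw [eL] at hmul
  linarith


end
end
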